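/- arXiv:1709.00142 — 3 statements merged into one kernel-verified Lean document; each statement's English description precedes it below -/
import Mathlib

section
/- Let S be a semigroup with a stable minimal ideal M having at least two R-classes and at least two L-classes, and let C = (I, N) be a retractable IN-pair on S with retraction f : I → M. Then the congruences λ_C = Δ_S ∪ ν_N ∪ {(x,y) ∈ I×I : xf L yf} and ρ_C = Δ_S ∪ ν_N ∪ {(x,y) ∈ I×I : xf R yf} are incomparable in the congruence lattice of S, their intersection is μ_C = Δ_S ∪ ν_N ∪ {(x,y) ∈ I×I : xf H yf}, and their join is R_C = Δ_S ∪ ν_N ∪ (I×I). -/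
namespace SG

variable {S : Type*} [Semigroup S]

/-- An ideal of a semigroup: a nonempty subset closed under left and right
multiplication by arbitrary elements. -/
def IsIdeal (I : Set S) : Prop :=
  I.Nonempty ∧ ∀ x ∈ I, ∀ a : S, a * x ∈ I ∧ x * a ∈ I

/-- The minimal ideal: an ideal contained in every ideal. -/
def IsMinIdeal (M : Set S) : Prop :=
  IsIdeal M ∧ ∀ I : Set S, IsIdeal I → M ⊆ I

/-- Every element of the set is regular. -/
def RegularSet (M : Set S) : Prop := ∀ m ∈ M, ∃ y : S, m * y * m = m

/-- `f` is a retraction of the ideal `I` onto the minimal ideal `M`: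
a homomorphism `I → M` fixing `M` pointwise. -/
def IsRetraction (I M : Set S) (f : S → S) : Prop :=
  (∀ x ∈ I, f x ∈ M) ∧ (∀ x ∈ I, ∀ y ∈ I, f (x * y) = f x * f y) ∧ ∀ x ∈ M, f x = x

/-- Green's R relation (via S¹ = `WithOne S`). -/
def GreenR (a b : S) : Prop :=
  (∃ u : WithOne S, (a : WithOne S) * u = (b : WithOne S)) ∧
    ∃ v : WithOne S, (b : WithOne S) * v = (a : WithOne S)

/-- Green's L relation. -/
def GreenL (a b : S) : Prop :=
  (∃ u : WithOne S, u * (a : WithOne S) = (b : WithOne S)) ∧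
    ∃ v : WithOne S, v * (b : WithOne S) = (a : WithOne S)

/-- Green's J relation. -/
def GreenJ (a b : S) : Prop :=
  (∃ u v : WithOne S, u * (a : WithOne S) * v = (b : WithOne S)) ∧
    ∃ u v : WithOne S, u * (b : WithOne S) * v = (a : WithOne S)

/-- Green's H relation. -/
def GreenH (a b : S) : Prop := GreenR a b ∧ GreenL a b

/-- Green's D relation, as R ∘ L. -/
def GreenD (a b : S) : Prop := ∃ c : S, GreenR a c ∧ GreenL c b

/-- A set is stable if for its elements `x`: `xa J x → xa R x` and `ax J x → ax L x`. -/
def StableSet (J : Set S) : Prop :=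
  ∀ x ∈ J, ∀ a : S, (GreenJ (x * a) x → GreenR (x * a) x) ∧ (GreenJ (a * x) x → GreenL (a * x) x)

/-- The set is a J-class. -/
def IsJClass (J : Set S) : Prop := ∃ a : S, J = {b | GreenJ a b}

/-- The set is a D-class. -/
def IsDClass (J : Set S) : Prop := ∃ a : S, J = {b | GreenD a b}

/-- A binary relation is a congruence on the semigroup. -/
def IsCongruence (r : S → S → Prop) : Prop :=
  Equivalence r ∧ ∀ a b c : S, r a b → r (c * a) (c * b) ∧ r (a * c) (b * c)

/-- `N` is a normal subgroup of the subgroup `G` of `S` with identity `e`. -/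
def IsNormalIn (N G : Set S) (e : S) : Prop :=
  N ⊆ G ∧ e ∈ N ∧ (∀ x ∈ N, ∀ y ∈ N, x * y ∈ N) ∧
    (∀ x ∈ N, ∃ y ∈ N, x * y = e ∧ y * x = e) ∧
    ∀ g ∈ G, ∀ g' ∈ G, g * g' = e → g' * g = e → ∀ x ∈ N, g * x * g' ∈ N

/-- The relation ν_N = S¹(N × N)S¹ ∩ (J × J). -/
def Nu (J N : Set S) (a b : S) : Prop :=
  a ∈ J ∧ b ∈ J ∧ ∃ x ∈ N, ∃ y ∈ N, ∃ s t : WithOne S,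
    s * (x : WithOne S) * t = (a : WithOne S) ∧ s * (y : WithOne S) * t = (b : WithOne S)

/-- `J` is disjoint from `I` and is minimal among the J-classes of `S \ I`. -/
def MinimalJClassOutside (J I : Set S) : Prop :=
  (∀ a ∈ J, a ∉ I) ∧
    ∀ b : S, b ∉ I →
      (∃ a ∈ J, ∃ u v : WithOne S, u * (a : WithOne S) * v = (b : WithOne S)) → b ∈ J

end SG

namespace SG

variable {S : Type*} [Semigroup S]

/-- The congruence `λ_C` associated to a retractable IN-pair `C = (I, N)`. -/
def LamRel (I J N : Set S) (f : S → S) (x y : S) : Prop :=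
  x = y ∨ Nu J N x y ∨ (x ∈ I ∧ y ∈ I ∧ GreenL (f x) (f y))

/-- The congruence `ρ_C`. -/
def RhoRel (I J N : Set S) (f : S → S) (x y : S) : Prop :=
  x = y ∨ Nu J N x y ∨ (x ∈ I ∧ y ∈ I ∧ GreenR (f x) (f y))

/-- The congruence `μ_C`. -/
def MuRel (I J N : Set S) (f : S → S) (x y : S) : Prop :=
  x = y ∨ Nu J N x y ∨ (x ∈ I ∧ y ∈ I ∧ GreenH (f x) (f y))

/-- The congruence `R_C`. -/
def RRel (I J N : Set S) (x y : S) : Prop :=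
  x = y ∨ Nu J N x y ∨ (x ∈ I ∧ y ∈ I)

end SG
namespace SG

variable {S : Type*} [Semigroup S]

/-! ### Auxiliary lemmas -/

section Aux

lemma coeR' (s : WithOne S) (x : S) : ∃ p : S, s * (x : WithOne S) = (p : WithOne S) := by
  induction s using WithOne.recOneCoe with
  | one => exact ⟨x, one_mul _⟩
  | coe s => exact ⟨s * x, (WithOne.coe_mul s x).symm⟩

lemma coeL' (s : WithOne S) (x : S) : ∃ p : S, (x : WithOne S) * s = (p : WithOne S) := by
  induction s using WithOne.recOneCoe with
  | one => exact ⟨x, mul_one _⟩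
  | coe s => exact ⟨x * s, (WithOne.coe_mul x s).symm⟩

lemma gR_refl (a : S) : GreenR a a := ⟨⟨1, mul_one _⟩, ⟨1, mul_one _⟩⟩

lemma gL_refl (a : S) : GreenL a a := ⟨⟨1, one_mul _⟩, ⟨1, one_mul _⟩⟩

lemma gH_refl (a : S) : GreenH a a := ⟨gR_refl a, gL_refl a⟩

lemma gR_symm {a b : S} (h : GreenR a b) : GreenR b a := ⟨h.2, h.1⟩

lemma gL_symm {a b : S} (h : GreenL a b) : GreenL b a := ⟨h.2, h.1⟩

lemma gH_symm {a b : S} (h : GreenH a b) : GreenH b a := ⟨gR_symm h.1, gL_symm h.2⟩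

lemma gR_trans {a b c : S} (h1 : GreenR a b) (h2 : GreenR b c) : GreenR a c := by
  obtain ⟨⟨u1, hu1⟩, ⟨v1, hv1⟩⟩ := h1
  obtain ⟨⟨u2, hu2⟩, ⟨v2, hv2⟩⟩ := h2
  exact ⟨⟨u1 * u2, by rw [← mul_assoc, hu1, hu2]⟩, ⟨v2 * v1, by rw [← mul_assoc, hv2, hv1]⟩⟩

lemma gL_trans {a b c : S} (h1 : GreenL a b) (h2 : GreenL b c) : GreenL a c := by
  obtain ⟨⟨u1, hu1⟩, ⟨v1, hv1⟩⟩ := h1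
  obtain ⟨⟨u2, hu2⟩, ⟨v2, hv2⟩⟩ := h2
  exact ⟨⟨u2 * u1, by rw [mul_assoc, hu1, hu2]⟩, ⟨v1 * v2, by rw [mul_assoc, hv2, hv1]⟩⟩

lemma gH_trans {a b c : S} (h1 : GreenH a b) (h2 : GreenH b c) : GreenH a c :=
  ⟨gR_trans h1.1 h2.1, gL_trans h1.2 h2.2⟩

lemma gJ_refl (a : S) : GreenJ a a := ⟨⟨1, 1, by simp⟩, ⟨1, 1, by simp⟩⟩

lemma gJ_symm {a b : S} (h : GreenJ a b) : GreenJ b a := ⟨h.2, h.1⟩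

lemma gJ_trans {a b c : S} (h1 : GreenJ a b) (h2 : GreenJ b c) : GreenJ a c := by
  obtain ⟨⟨u1, v1, h1f⟩, ⟨u1', v1', h1b⟩⟩ := h1
  obtain ⟨⟨u2, v2, h2f⟩, ⟨u2', v2', h2b⟩⟩ := h2
  constructor
  · exact ⟨u2 * u1, v1 * v2, by rw [← h2f, ← h1f]; simp only [mul_assoc]⟩
  · exact ⟨u1' * u2', v2' * v1', by rw [← h1b, ← h2b]; simp only [mul_assoc]⟩

lemma gR_J {a b : S} (h : GreenR a b) : GreenJ a b := by
  obtain ⟨⟨u, hu⟩, ⟨v, hv⟩⟩ := h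
  exact ⟨⟨1, u, by rw [one_mul, hu]⟩, ⟨1, v, by rw [one_mul, hv]⟩⟩

lemma gL_J {a b : S} (h : GreenL a b) : GreenJ a b := by
  obtain ⟨⟨u, hu⟩, ⟨v, hv⟩⟩ := h
  exact ⟨⟨u, 1, by rw [mul_one, hu]⟩, ⟨v, 1, by rw [mul_one, hv]⟩⟩

lemma gR_mull {a b : S} (c : S) (h : GreenR a b) : GreenR (c * a) (c * b) := by
  obtain ⟨⟨u, hu⟩, ⟨v, hv⟩⟩ := h
  constructor
  · exact ⟨u, by push_cast; rw [mul_assoc, hu]⟩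
  · exact ⟨v, by push_cast; rw [mul_assoc, hv]⟩

lemma gL_mulr {a b : S} (c : S) (h : GreenL a b) : GreenL (a * c) (b * c) := by
  obtain ⟨⟨u, hu⟩, ⟨v, hv⟩⟩ := h
  constructor
  · exact ⟨u, by push_cast; rw [← mul_assoc, hu]⟩
  · exact ⟨v, by push_cast; rw [← mul_assoc, hv]⟩

variable {M I J N : Set S} {e : S} {f : S → S}

/-- absorption into an ideal -/
lemma Iabs (hI : IsIdeal I) {z w : S} (hz : z ∈ I) (u v : WithOne S)
    (h : u * (z : WithOne S) * v = (w : WithOne S)) : w ∈ I := by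
  induction u using WithOne.recOneCoe with
  | one =>
    rw [one_mul] at h
    induction v using WithOne.recOneCoe with
    | one =>
      rw [mul_one] at h
      exact (WithOne.coe_inj.mp h) ▸ hz
    | coe v =>
      rw [← WithOne.coe_mul] at h
      exact (WithOne.coe_inj.mp h) ▸ (hI.2 z hz v).2
  | coe u =>
    induction v using WithOne.recOneCoe with
    | one =>
      rw [mul_one, ← WithOne.coe_mul] at h
      exact (WithOne.coe_inj.mp h) ▸ (hI.2 z hz u).1
    | coe v =>
      rw [← WithOne.coe_mul, ← WithOne.coe_mul] at h
      exact (WithOne.coe_inj.mp h) ▸ (hI.2 (u * z) (hI.2 z hz u).1 v).2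

lemma IabsR (hI : IsIdeal I) {z w : S} (hz : z ∈ I) (h : GreenR z w) : w ∈ I := by
  obtain ⟨⟨u, hu⟩, -⟩ := h
  exact Iabs hI hz 1 u (by rw [one_mul, hu])

lemma IabsL (hI : IsIdeal I) {z w : S} (hz : z ∈ I) (h : GreenL z w) : w ∈ I := by
  obtain ⟨⟨u, hu⟩, -⟩ := h
  exact Iabs hI hz u 1 (by rw [mul_one, hu])

end Aux

section Aux2

variable {M I J N : Set S} {e : S} {f : S → S}

lemma mem_of_gJ (hJ : IsJClass J) {a b : S} (ha : a ∈ J) (h : GreenJ a b) : b ∈ J := by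
  obtain ⟨a₀, rfl⟩ := hJ
  exact gJ_trans ha h

lemma memJ_gJ (hJ : IsJClass J) {a b : S} (ha : a ∈ J) (hb : b ∈ J) : GreenJ a b := by
  obtain ⟨a₀, rfl⟩ := hJ
  exact gJ_trans (gJ_symm ha) hb

lemma Jclosed (hmin : MinimalJClassOutside J I) {a b : S} (ha : a ∈ J) (u v : WithOne S)
    (h : u * (a : WithOne S) * v = (b : WithOne S)) (hb : b ∉ I) : b ∈ J :=
  hmin.2 b hb ⟨a, ha, u, v, h⟩

lemma stabR (hJ : IsJClass J) (hJs : StableSet J) {a c : S} (ha : a ∈ J) (hac : a * c ∈ J) :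
    GreenR (a * c) a :=
  (hJs a ha c).1 (memJ_gJ hJ hac ha)

lemma stabL (hJ : IsJClass J) (hJs : StableSet J) {a c : S} (ha : a ∈ J) (hca : c * a ∈ J) :
    GreenL (c * a) a :=
  (hJs a ha c).2 (memJ_gJ hJ hca ha)

/-! ### facts about the group `H_e` -/

lemma e_mul (he : e * e = e) {x : S} (hx : GreenH x e) : e * x = x := by
  obtain ⟨⟨-, v, hv⟩, -⟩ := hx
  apply WithOne.coe_inj.mp
  push_cast
  rw [← hv, ← mul_assoc]
  norm_cast
  rw [he]

lemma mul_e (he : e * e = e) {x : S} (hx : GreenH x e) : x * e = x := by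
  obtain ⟨-, ⟨-, v, hv⟩⟩ := hx
  apply WithOne.coe_inj.mp
  push_cast
  rw [← hv, mul_assoc]
  norm_cast
  rw [he]

lemma Hinv (he : e * e = e) {x : S} (hx : GreenH x e) :
    ∃ x' : S, GreenH x' e ∧ x * x' = e ∧ x' * x = e := by
  obtain ⟨δ, hδ⟩ := hx.1.1
  obtain ⟨γ, hγ⟩ := hx.2.1
  -- hδ : ↑x * δ = ↑e, hγ : γ * ↑x = ↑e
  induction δ using WithOne.recOneCoe with
  | one =>
    rw [mul_one] at hδ
    have hxe : x = e := WithOne.coe_inj.mp hδ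
    subst hxe
    exact ⟨x, gH_refl x, he, he⟩
  | coe d =>
    have hxd : x * d = e := by exact_mod_cast hδ
    have hxe : x * e = x := mul_e he hx
    have hex : e * x = x := e_mul he hx
    have k1 : x * (e * d) = e := by rw [← mul_assoc, hxe, hxd]
    have hc : ((e * d : S) : WithOne S) = γ * (e : WithOne S) := by
      calc ((e * d : S) : WithOne S) = (e : WithOne S) * (d : WithOne S) := by norm_cast
        _ = γ * (x : WithOne S) * (d : WithOne S) := by rw [hγ]
        _ = γ * ((x * d : S) : WithOne S) := by rw [mul_assoc]; norm_cast
        _ = γ * (e : WithOne S) := by rw [hxd]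
    have k2 : (e * d) * x = e := by
      apply WithOne.coe_inj.mp
      calc (((e * d) * x : S) : WithOne S) = ((e * d : S) : WithOne S) * (x : WithOne S) := by
            norm_cast
        _ = γ * (e : WithOne S) * (x : WithOne S) := by rw [hc]
        _ = γ * ((e * x : S) : WithOne S) := by rw [mul_assoc]; norm_cast
        _ = γ * (x : WithOne S) := by rw [hex]
        _ = (e : WithOne S) := hγ
    refine ⟨e * d, ⟨?_, ?_⟩, k1, k2⟩
    · exact ⟨⟨(x : WithOne S), by norm_cast⟩, ⟨(d : WithOne S), by norm_cast⟩⟩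
    · exact ⟨⟨(x : WithOne S), by norm_cast⟩, ⟨γ, hc.symm⟩⟩

end Aux2

section Aux3

variable {M I J N : Set S} {e : S} {f : S → S}

/-! ### facts about the minimal ideal `M` -/

lemma Mhalf (hM : IsMinIdeal M) {m m' : S} (hm : m ∈ M) (hm' : m' ∈ M) :
    ∃ u v : WithOne S, u * (m : WithOne S) * v = (m' : WithOne S) := by
  have hK : IsIdeal {x : S | ∃ u v : WithOne S, u * (m : WithOne S) * v = (x : WithOne S)} := by
    constructor
    · exact ⟨m, 1, 1, by simp⟩
    · rintro x ⟨u, v, huv⟩ a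
      constructor
      · exact ⟨(a : WithOne S) * u, v, by rw [mul_assoc ((a : WithOne S)) u, mul_assoc, huv]; norm_cast⟩
      · exact ⟨u, v * (a : WithOne S), by rw [← mul_assoc, huv]; norm_cast⟩
  exact hM.2 _ hK hm'

lemma MgJ (hM : IsMinIdeal M) {m m' : S} (hm : m ∈ M) (hm' : m' ∈ M) : GreenJ m m' :=
  ⟨Mhalf hM hm hm', Mhalf hM hm' hm⟩

lemma M1L (hM : IsMinIdeal M) (hMs : StableSet M) {z : S} (hz : z ∈ M) (a : S) :
    GreenL (a * z) z :=
  (hMs z hz a).2 (MgJ hM (hM.1.2 z hz a).1 hz)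

lemma M1R (hM : IsMinIdeal M) (hMs : StableSet M) {z : S} (hz : z ∈ M) (a : S) :
    GreenR (z * a) z :=
  (hMs z hz a).1 (MgJ hM (hM.1.2 z hz a).2 hz)

lemma M4L (hM : IsMinIdeal M) (hMs : StableSet M) {z : S} (hz : z ∈ M) :
    ∃ h ∈ M, h * z = z := by
  obtain ⟨⟨u, hu⟩, -⟩ := M1L hM hMs hz z
  induction u using WithOne.recOneCoe with
  | one =>
    rw [one_mul] at hu
    exact ⟨z, hz, WithOne.coe_inj.mp hu⟩
  | coe u =>
    have : u * (z * z) = z := by exact_mod_cast hu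
    exact ⟨u * z, (hM.1.2 z hz u).1, by rw [mul_assoc, this]⟩

lemma M4R (hM : IsMinIdeal M) (hMs : StableSet M) {z : S} (hz : z ∈ M) :
    ∃ k ∈ M, z * k = z := by
  obtain ⟨⟨u, hu⟩, -⟩ := M1R hM hMs hz z
  induction u using WithOne.recOneCoe with
  | one =>
    rw [mul_one] at hu
    exact ⟨z, hz, WithOne.coe_inj.mp hu⟩
  | coe u =>
    have : (z * z) * u = z := by exact_mod_cast hu
    exact ⟨z * u, (hM.1.2 z hz u).2, by rw [← mul_assoc, this]⟩

/-! ### facts about the retraction `f` -/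

lemma fxm (hM : IsMinIdeal M) (hI : IsIdeal I) (hf : IsRetraction I M f) {x m : S}
    (hx : x ∈ I) (hm : m ∈ M) : x * m = f x * m := by
  have h1 : x * m ∈ M := (hM.1.2 m hm x).1
  calc x * m = f (x * m) := (hf.2.2 _ h1).symm
    _ = f x * f m := hf.2.1 x hx m (hM.2 I hI hm)
    _ = f x * m := by rw [hf.2.2 m hm]

lemma fmx (hM : IsMinIdeal M) (hI : IsIdeal I) (hf : IsRetraction I M f) {x m : S}
    (hx : x ∈ I) (hm : m ∈ M) : m * x = m * f x := by
  have h1 : m * x ∈ M := (hM.1.2 m hm x).2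
  calc m * x = f (m * x) := (hf.2.2 _ h1).symm
    _ = f m * f x := hf.2.1 m (hM.2 I hI hm) x hx
    _ = m * f x := by rw [hf.2.2 m hm]

lemma fL1 (hM : IsMinIdeal M) (hMs : StableSet M) (hI : IsIdeal I)
    (hf : IsRetraction I M f) {x : S} (hx : x ∈ I) (c : S) : GreenL (f (c * x)) (f x) := by
  have hcx : c * x ∈ I := (hI.2 x hx c).1
  obtain ⟨h, hh, hhA⟩ := M4L hM hMs (hf.1 _ hcx)
  have key : f (c * x) = (h * c) * f x := by
    calc f (c * x) = h * f (c * x) := hhA.symm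
      _ = h * (c * x) := (fmx hM hI hf hcx hh).symm
      _ = (h * c) * x := (mul_assoc h c x).symm
      _ = (h * c) * f x := fmx hM hI hf hx (hM.1.2 h hh c).2
  rw [key]
  exact M1L hM hMs (hf.1 x hx) (h * c)

lemma fL2 (hM : IsMinIdeal M) (hMs : StableSet M) (hI : IsIdeal I)
    (hf : IsRetraction I M f) {x : S} (hx : x ∈ I) (c : S) : GreenL (f (x * c)) (f x * c) := by
  have hxc : x * c ∈ I := (hI.2 x hx c).2
  obtain ⟨h, hh, hhA⟩ := M4L hM hMs (hf.1 _ hxc)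
  have key : f (x * c) = h * (f x * c) := by
    calc f (x * c) = h * f (x * c) := hhA.symm
      _ = h * (x * c) := (fmx hM hI hf hxc hh).symm
      _ = (h * x) * c := (mul_assoc h x c).symm
      _ = (h * f x) * c := by rw [fmx hM hI hf hx hh]
      _ = h * (f x * c) := mul_assoc h (f x) c
  rw [key]
  exact M1L hM hMs ((hM.1.2 (f x) (hf.1 x hx) c).2) h

lemma fR1 (hM : IsMinIdeal M) (hMs : StableSet M) (hI : IsIdeal I)
    (hf : IsRetraction I M f) {x : S} (hx : x ∈ I) (c : S) : GreenR (f (x * c)) (f x) := by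
  have hxc : x * c ∈ I := (hI.2 x hx c).2
  obtain ⟨k, hk, hkA⟩ := M4R hM hMs (hf.1 _ hxc)
  have key : f (x * c) = f x * (c * k) := by
    calc f (x * c) = f (x * c) * k := hkA.symm
      _ = (x * c) * k := (fxm hM hI hf hxc hk).symm
      _ = x * (c * k) := mul_assoc x c k
      _ = f x * (c * k) := fxm hM hI hf hx (hM.1.2 k hk c).1
  rw [key]
  exact M1R hM hMs (hf.1 x hx) (c * k)

lemma fR2 (hM : IsMinIdeal M) (hMs : StableSet M) (hI : IsIdeal I)
    (hf : IsRetraction I M f) {x : S} (hx : x ∈ I) (c : S) : GreenR (f (c * x)) (c * f x) := by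
  have hcx : c * x ∈ I := (hI.2 x hx c).1
  obtain ⟨k, hk, hkA⟩ := M4R hM hMs (hf.1 _ hcx)
  have key : f (c * x) = (c * f x) * k := by
    calc f (c * x) = f (c * x) * k := hkA.symm
      _ = (c * x) * k := (fxm hM hI hf hcx hk).symm
      _ = c * (x * k) := mul_assoc c x k
      _ = c * (f x * k) := by rw [fxm hM hI hf hx hk]
      _ = (c * f x) * k := (mul_assoc c (f x) k).symm
  rw [key]
  exact M1R hM hMs ((hM.1.2 (f x) (hf.1 x hx) c).1) k

end Aux3

section Aux4

variable {M I J N : Set S} {e : S} {f : S → S}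

lemma gW (hJ : IsJClass J) (hJs : StableSet J) {x g : S} (hx : x ∈ J) (hgJ : g ∈ J)
    (w : WithOne S) (h : (x : WithOne S) * w = (g : WithOne S)) : GreenR g x := by
  induction w using WithOne.recOneCoe with
  | one =>
    rw [mul_one] at h
    have hxg := WithOne.coe_inj.mp h
    subst hxg
    exact gR_refl _
  | coe w =>
    have h' : x * w = g := by exact_mod_cast h
    rw [← h']
    exact stabR hJ hJs hx (h' ▸ hgJ)

lemma wG (hJ : IsJClass J) (hJs : StableSet J) {x g : S} (hx : x ∈ J) (hgJ : g ∈ J)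
    (w : WithOne S) (h : w * (x : WithOne S) = (g : WithOne S)) : GreenL g x := by
  induction w using WithOne.recOneCoe with
  | one =>
    rw [one_mul] at h
    have hxg := WithOne.coe_inj.mp h
    subst hxg
    exact gL_refl _
  | coe w =>
    have h' : w * x = g := by exact_mod_cast h
    rw [← h']
    exact stabL hJ hJs hx (h' ▸ hgJ)

lemma nu_of (heN : e ∈ N) {a b n p q : S} (ha : a ∈ J) (hb : b ∈ J) (hn : n ∈ N)
    (h1 : p * e * q = a) (h2 : p * n * q = b) : Nu J N a b :=
  ⟨ha, hb, e, heN, n, hn, (p : WithOne S), (q : WithOne S),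
    by rw [← h1]; norm_cast, by rw [← h2]; norm_cast⟩

lemma nu_to (he : e * e = e) (hN : IsNormalIn N {x : S | GreenH x e} e) {a b : S}
    (hnu : Nu J N a b) : ∃ n ∈ N, ∃ p q : S, p * e * q = a ∧ p * n * q = b := by
  obtain ⟨ha, hb, x, hx, y, hy, s, t, h1, h2⟩ := hnu
  have hxH : GreenH x e := hN.1 hx
  have hyH : GreenH y e := hN.1 hy
  have hex : e * x = x := e_mul he hxH
  have hxe : x * e = x := mul_e he hxH
  have hey : e * y = y := e_mul he hyH
  obtain ⟨p₀, hp₀⟩ := coeR' s e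
  obtain ⟨q₀, hq₀⟩ := coeL' t e
  have cx : (e : WithOne S) * (x : WithOne S) = (x : WithOne S) := by
    rw [← WithOne.coe_mul, hex]
  have cxe : (x : WithOne S) * (e : WithOne S) = (x : WithOne S) := by
    rw [← WithOne.coe_mul, hxe]
  have cy : (e : WithOne S) * (y : WithOne S) = (y : WithOne S) := by
    rw [← WithOne.coe_mul, hey]
  have keyx : ((p₀ * x * q₀ : S) : WithOne S) = (a : WithOne S) := by
    push_cast
    rw [← hp₀, ← hq₀, ← h1]
    simp only [mul_assoc]
    rw [← mul_assoc (e : WithOne S) (x : WithOne S), cx, ← mul_assoc (x : WithOne S), cxe]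
  have keyy : ((p₀ * y * q₀ : S) : WithOne S) = (b : WithOne S) := by
    push_cast
    rw [← hp₀, ← hq₀, ← h2]
    simp only [mul_assoc]
    rw [← mul_assoc (e : WithOne S) (y : WithOne S), cy]
    rw [show (y : WithOne S) * ((e : WithOne S) * t) = ((y * e : S) : WithOne S) * t by
      rw [← mul_assoc]; norm_cast]
    rw [mul_e he hyH]
  have ha' : p₀ * x * q₀ = a := WithOne.coe_inj.mp keyx
  have hb' : p₀ * y * q₀ = b := WithOne.coe_inj.mp keyy
  obtain ⟨x', hx', hxx', hx'x⟩ := hN.2.2.2.1 x hx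
  refine ⟨x' * y, hN.2.2.1 x' hx' y hy, p₀ * x, q₀, ?_, ?_⟩
  · rw [mul_assoc p₀ x e, hxe]; exact ha'
  · rw [mul_assoc p₀ x, ← mul_assoc x x', hxx', hey]; exact hb'

lemma nuH (he : e * e = e) (heJ : e ∈ J) (hJ : IsJClass J) (hJs : StableSet J)
    (hmin : MinimalJClassOutside J I) (hI : IsIdeal I)
    (hN : IsNormalIn N {x : S | GreenH x e} e) {a b : S} (hnu : Nu J N a b) :
    GreenH a b := by
  have ha : a ∈ J := hnu.1
  have hb : b ∈ J := hnu.2.1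
  obtain ⟨n, hn, p, q, h1, h2⟩ := nu_to he hN hnu
  have hnH : GreenH n e := hN.1 hn
  have haI : a ∉ I := hmin.1 a ha
  have hbI : b ∉ I := hmin.1 b hb
  have hnJ : n ∈ J := mem_of_gJ hJ heJ (gJ_symm (gR_J hnH.1))
  have heqI : e * q ∉ I := fun h => haI
    (Iabs hI h (p : WithOne S) 1 (by rw [mul_one, ← WithOne.coe_mul, ← mul_assoc, h1]))
  have heqJ : e * q ∈ J := Jclosed hmin heJ 1 (q : WithOne S)
    (by rw [one_mul, ← WithOne.coe_mul]) heqI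
  have hpeI : p * e ∉ I := fun h => haI
    (Iabs hI h 1 (q : WithOne S) (by rw [one_mul, ← WithOne.coe_mul, h1]))
  have hpeJ : p * e ∈ J := Jclosed hmin heJ (p : WithOne S) 1
    (by rw [mul_one, ← WithOne.coe_mul]) hpeI
  have hnqI : n * q ∉ I := fun h => hbI
    (Iabs hI h (p : WithOne S) 1 (by rw [mul_one, ← WithOne.coe_mul, ← mul_assoc, h2]))
  have hnqJ : n * q ∈ J := Jclosed hmin hnJ 1 (q : WithOne S)
    (by rw [one_mul, ← WithOne.coe_mul]) hnqI
  have hpnI : p * n ∉ I := fun h => hbI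
    (Iabs hI h 1 (q : WithOne S) (by rw [one_mul, ← WithOne.coe_mul, h2]))
  have hpnJ : p * n ∈ J := Jclosed hmin hnJ (p : WithOne S) 1
    (by rw [mul_one, ← WithOne.coe_mul]) hpnI
  have aLeq : GreenL a (e * q) := by
    have h := stabL hJ hJs heqJ (show p * (e * q) ∈ J by rw [← mul_assoc, h1]; exact ha)
    rw [← mul_assoc, h1] at h
    exact h
  have aRpe : GreenR a (p * e) := by
    have h := stabR hJ hJs hpeJ (show (p * e) * q ∈ J by rw [h1]; exact ha)
    rw [h1] at h
    exact h
  have bLnq : GreenL b (n * q) := by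
    have h := stabL hJ hJs hnqJ (show p * (n * q) ∈ J by rw [← mul_assoc, h2]; exact hb)
    rw [← mul_assoc, h2] at h
    exact h
  have bRpn : GreenR b (p * n) := by
    have h := stabR hJ hJs hpnJ (show (p * n) * q ∈ J by rw [h2]; exact hb)
    rw [h2] at h
    exact h
  constructor
  · exact gR_trans (gR_trans aRpe (gR_mull p (gR_symm hnH.1))) (gR_symm bRpn)
  · exact gL_trans (gL_trans aLeq (gL_mulr q (gL_symm hnH.2))) (gL_symm bLnq)

lemma nu_refl (hJ : IsJClass J) (heJ : e ∈ J) (heN : e ∈ N) {a : S} (ha : a ∈ J) :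
    Nu J N a a := by
  obtain ⟨⟨u, v, huv⟩, -⟩ := memJ_gJ hJ heJ ha
  exact ⟨ha, ha, e, heN, e, heN, u, v, huv, huv⟩

lemma nu_symm {a b : S} (h : Nu J N a b) : Nu J N b a := by
  obtain ⟨ha, hb, x, hx, y, hy, s, t, h1, h2⟩ := h
  exact ⟨hb, ha, y, hy, x, hx, s, t, h2, h1⟩

end Aux4

section Aux5

variable {M I J N : Set S} {e : S} {f : S → S}

lemma indep (he : e * e = e) (heJ : e ∈ J) (hJ : IsJClass J) (hJs : StableSet J)
    (hmin : MinimalJClassOutside J I) (hI : IsIdeal I)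
    (hN : IsNormalIn N {x : S | GreenH x e} e) {b P Q p' q' : S}
    (hb : b ∈ J) (h1 : P * e * Q = b) (h2 : p' * e * q' = b) {m : S} (hm : m ∈ N) :
    ∃ m' ∈ N, P * m' * Q = p' * m * q' := by
  have hbI : b ∉ I := hmin.1 b hb
  have side : ∀ X Y : S, X * e * Y = b →
      (X * e ∈ J ∧ e * Y ∈ J ∧ GreenL (X * e) e ∧ GreenR (e * Y) e ∧
        GreenR b (X * e) ∧ GreenL b (e * Y)) := by
    intro X Y hXY
    have hXeI : X * e ∉ I := fun h => hbI
      (Iabs hI h 1 (Y : WithOne S) (by rw [one_mul, ← WithOne.coe_mul, hXY]))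
    have hXeJ : X * e ∈ J := Jclosed hmin heJ (X : WithOne S) 1
      (by rw [mul_one, ← WithOne.coe_mul]) hXeI
    have heYI : e * Y ∉ I := fun h => hbI
      (Iabs hI h (X : WithOne S) 1
        (by rw [mul_one, ← WithOne.coe_mul, ← mul_assoc, hXY]))
    have heYJ : e * Y ∈ J := Jclosed hmin heJ 1 (Y : WithOne S)
      (by rw [one_mul, ← WithOne.coe_mul]) heYI
    have hbR : GreenR b (X * e) := by
      have h := stabR hJ hJs hXeJ (show (X * e) * Y ∈ J by rw [hXY]; exact hb)
      rw [hXY] at h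
      exact h
    have hbL : GreenL b (e * Y) := by
      have h := stabL hJ hJs heYJ (show X * (e * Y) ∈ J by rw [← mul_assoc, hXY]; exact hb)
      rw [← mul_assoc, hXY] at h
      exact h
    exact ⟨hXeJ, heYJ, stabL hJ hJs heJ hXeJ, stabR hJ hJs heJ heYJ, hbR, hbL⟩
  obtain ⟨hp1J, hq1J, hp1L, hq1R, hbRp1, hbLq1⟩ := side P Q h1
  obtain ⟨hp2J, hq2J, hp2L, hq2R, hbRp2, hbLq2⟩ := side p' q' h2
  have p1Rp2 : GreenR (P * e) (p' * e) := gR_trans (gR_symm hbRp1) hbRp2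
  have q1Lq2 : GreenL (e * Q) (e * q') := gL_trans (gL_symm hbLq1) hbLq2
  -- construct g with p' * e = (P * e) * g
  obtain ⟨w, hw⟩ := p1Rp2.1
  obtain ⟨g, hg⟩ := coeL' w e
  have cPee : (P * e) * e = P * e := by rw [mul_assoc, he]
  have hp2g : p' * e = (P * e) * g := by
    apply WithOne.coe_inj.mp
    calc ((p' * e : S) : WithOne S) = ((P * e : S) : WithOne S) * w := hw.symm
      _ = (((P * e) * e : S) : WithOne S) * w := by rw [cPee]
      _ = ((P * e : S) : WithOne S) * ((e : WithOne S) * w) := by push_cast; rw [mul_assoc]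
      _ = ((P * e : S) : WithOne S) * (g : WithOne S) := by rw [hg]
      _ = (((P * e) * g : S) : WithOne S) := by norm_cast
  have heg : e * g = g := by
    apply WithOne.coe_inj.mp
    calc ((e * g : S) : WithOne S) = (e : WithOne S) * (g : WithOne S) := by norm_cast
      _ = (e : WithOne S) * ((e : WithOne S) * w) := by rw [hg]
      _ = ((e * e : S) : WithOne S) * w := by push_cast; rw [mul_assoc]
      _ = (e : WithOne S) * w := by rw [he]
      _ = (g : WithOne S) := hg
  have hgI : g ∉ I := fun h => (hmin.1 _ hp2J) (by rw [hp2g]; exact (hI.2 g h (P * e)).1)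
  have hgJ : g ∈ J := Jclosed hmin heJ 1 w (by rw [one_mul]; exact hg) hgI
  have hgRe : GreenR g e := gW hJ hJs heJ hgJ w hg
  have hgLe : GreenL g e := by
    obtain ⟨α, hα⟩ := hp1L.1
    have hαg : α * ((p' * e : S) : WithOne S) = (g : WithOne S) := by
      calc α * ((p' * e : S) : WithOne S)
          = α * (((P * e) * g : S) : WithOne S) := by rw [hp2g]
        _ = α * (((P * e : S) : WithOne S) * (g : WithOne S)) := by norm_cast
        _ = (α * ((P * e : S) : WithOne S)) * (g : WithOne S) := (mul_assoc _ _ _).symm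
        _ = (e : WithOne S) * (g : WithOne S) := by rw [hα]
        _ = ((e * g : S) : WithOne S) := by norm_cast
        _ = (g : WithOne S) := by rw [heg]
    exact gL_trans (wG hJ hJs hp2J hgJ α hαg) hp2L
  have hgH : GreenH g e := ⟨hgRe, hgLe⟩
  -- construct h with e * q' = h * (e * Q)
  obtain ⟨w', hw'⟩ := q1Lq2.1
  obtain ⟨h, hh⟩ := coeR' w' e
  have ceeQ : e * (e * Q) = e * Q := by rw [← mul_assoc, he]
  have hq2h : e * q' = h * (e * Q) := by
    apply WithOne.coe_inj.mp
    symm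
    calc ((h * (e * Q) : S) : WithOne S)
        = (h : WithOne S) * ((e * Q : S) : WithOne S) := by norm_cast
      _ = (w' * (e : WithOne S)) * ((e * Q : S) : WithOne S) := by rw [hh]
      _ = w' * ((e : WithOne S) * ((e * Q : S) : WithOne S)) := mul_assoc _ _ _
      _ = w' * ((e * (e * Q) : S) : WithOne S) := by norm_cast
      _ = w' * ((e * Q : S) : WithOne S) := by rw [ceeQ]
      _ = ((e * q' : S) : WithOne S) := hw'
  have hhe : h * e = h := by
    apply WithOne.coe_inj.mp
    calc ((h * e : S) : WithOne S) = (h : WithOne S) * (e : WithOne S) := by norm_cast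
      _ = (w' * (e : WithOne S)) * (e : WithOne S) := by rw [hh]
      _ = w' * ((e * e : S) : WithOne S) := by rw [mul_assoc]; norm_cast
      _ = w' * (e : WithOne S) := by rw [he]
      _ = (h : WithOne S) := hh
  have hhI : h ∉ I := fun hc => (hmin.1 _ hq2J) (by rw [hq2h]; exact (hI.2 h hc (e * Q)).2)
  have hhJ : h ∈ J := Jclosed hmin heJ w' 1 (by rw [mul_one]; exact hh) hhI
  have hhLe : GreenL h e := wG hJ hJs heJ hhJ w' hh
  have hhRe : GreenR h e := by
    obtain ⟨β, hβ⟩ := hq1R.1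
    have hβh : ((e * q' : S) : WithOne S) * β = (h : WithOne S) := by
      calc ((e * q' : S) : WithOne S) * β
          = ((h * (e * Q) : S) : WithOne S) * β := by rw [hq2h]
        _ = ((h : WithOne S) * ((e * Q : S) : WithOne S)) * β := by norm_cast
        _ = (h : WithOne S) * (((e * Q : S) : WithOne S) * β) := mul_assoc _ _ _
        _ = (h : WithOne S) * (e : WithOne S) := by rw [hβ]
        _ = ((h * e : S) : WithOne S) := by norm_cast
        _ = (h : WithOne S) := by rw [hhe]
    exact gR_trans (gW hJ hJs hq2J hhJ β hβh) hq2R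
  have hhH : GreenH h e := ⟨hhRe, hhLe⟩
  -- g * h = e
  obtain ⟨α, hα⟩ := hp1L.1
  obtain ⟨β, hβ⟩ := hq1R.1
  have hb1 : (P * e) * (e * Q) = b := by
    rw [mul_assoc P e, ← mul_assoc e e, he, ← mul_assoc]; exact h1
  have hb2 : (p' * e) * (e * q') = b := by
    rw [mul_assoc p' e, ← mul_assoc e e, he, ← mul_assoc]; exact h2
  have c1 : α * (b : WithOne S) * β = (e : WithOne S) := by
    calc α * (b : WithOne S) * β
        = α * (((P * e : S) : WithOne S) * ((e * Q : S) : WithOne S)) * β := by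
          rw [← hb1]; norm_cast
      _ = (α * ((P * e : S) : WithOne S)) * (((e * Q : S) : WithOne S) * β) := by
          simp only [mul_assoc]
      _ = (e : WithOne S) * (e : WithOne S) := by rw [hα, hβ]
      _ = ((e * e : S) : WithOne S) := by norm_cast
      _ = (e : WithOne S) := by rw [he]
  have c2 : α * (b : WithOne S) * β = ((g * h : S) : WithOne S) := by
    calc α * (b : WithOne S) * β
        = α * (((P * e : S) : WithOne S) * ((g : WithOne S) *
            ((h : WithOne S) * ((e * Q : S) : WithOne S)))) * β := by
          rw [← hb2, hp2g, hq2h]; push_cast; simp only [mul_assoc]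
      _ = (α * ((P * e : S) : WithOne S)) * ((g : WithOne S) *
            ((h : WithOne S) * (((e * Q : S) : WithOne S) * β))) := by
          simp only [mul_assoc]
      _ = (e : WithOne S) * ((g : WithOne S) * ((h : WithOne S) * (e : WithOne S))) := by
          rw [hα, hβ]
      _ = ((e * (g * (h * e)) : S) : WithOne S) := by norm_cast
      _ = ((g * h : S) : WithOne S) := by rw [hhe, ← mul_assoc, heg]
  have hgh : g * h = e := WithOne.coe_inj.mp (c2.symm.trans c1)
  -- inverse of g
  obtain ⟨g', hg'H, hgg', hg'g⟩ := Hinv he hgH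
  have hhg' : h = g' := by
    calc h = e * h := (e_mul he hhH).symm
      _ = (g' * g) * h := by rw [hg'g]
      _ = g' * (g * h) := mul_assoc _ _ _
      _ = g' * e := by rw [hgh]
      _ = g' := mul_e he hg'H
  have hm'N : g * m * g' ∈ N := hN.2.2.2.2 g hgH g' hg'H hgg' hg'g m hm
  refine ⟨g * m * g', hm'N, ?_⟩
  have hmH : GreenH m e := hN.1 hm
  have hem : e * m = m := e_mul he hmH
  have hme : m * e = m := mul_e he hmH
  have hg'e : g' * e = g' := mul_e he hg'H
  have step2 : P * (g * (m * (g' * Q))) = P * (g * (m * (g' * (e * Q)))) := by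
    conv_lhs => rw [← hg'e]
    simp only [mul_assoc]
  have step3 : P * (g * (m * (g' * (e * Q)))) = (P * e) * (g * (m * (g' * (e * Q)))) := by
    conv_lhs => rw [← heg]
    simp only [mul_assoc]
  have step5 : ((P * e) * g) * (m * (g' * (e * Q))) = (p' * e) * (m * (e * q')) := by
    rw [← hp2g, ← hhg', ← hq2h]
  have step6 : (p' * e) * (m * (e * q')) = p' * m * q' := by
    have hx : e * (m * (e * q')) = m * (e * q') := by rw [← mul_assoc, hem]
    rw [mul_assoc, hx, ← mul_assoc m e q', hme, ← mul_assoc]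
  calc P * (g * m * g') * Q = P * (g * (m * (g' * Q))) := by simp only [mul_assoc]
    _ = P * (g * (m * (g' * (e * Q)))) := step2
    _ = (P * e) * (g * (m * (g' * (e * Q)))) := step3
    _ = ((P * e) * g) * (m * (g' * (e * Q))) := (mul_assoc _ _ _).symm
    _ = (p' * e) * (m * (e * q')) := step5
    _ = p' * m * q' := step6

lemma nu_trans (he : e * e = e) (heJ : e ∈ J) (hJ : IsJClass J) (hJs : StableSet J)
    (hmin : MinimalJClassOutside J I) (hI : IsIdeal I)
    (hN : IsNormalIn N {x : S | GreenH x e} e) {a b c : S}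
    (h1 : Nu J N a b) (h2 : Nu J N b c) : Nu J N a c := by
  obtain ⟨n1, hn1, p, q, e1, e2⟩ := nu_to he hN h1
  obtain ⟨n2, hn2, p', q', e3, e4⟩ := nu_to he hN h2
  have hne : n1 * e = n1 := mul_e he (hN.1 hn1)
  have hPe : (p * n1) * e * q = b := by rw [mul_assoc p n1 e, hne]; exact e2
  obtain ⟨m', hm', hfin⟩ := indep he heJ hJ hJs hmin hI hN h1.2.1 hPe e3 hn2
  have hc : p * (n1 * m') * q = c := by
    rw [← mul_assoc p n1 m']
    exact hfin.trans e4
  exact nu_of hN.2.1 h1.1 h2.2.1 (hN.2.2.1 n1 hn1 m' hm') e1 hc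

end Aux5

section Aux6

variable {M I J N : Set S} {e : S} {f : S → S}

/-- collapse under left multiplication into `I` -/
lemma clpL (he : e * e = e) (hM : IsMinIdeal M) (hMs : StableSet M) (hI : IsIdeal I)
    (hf : IsRetraction I M f) (hN : IsNormalIn N {x : S | GreenH x e} e)
    (hact : ∀ x ∈ M, ∀ a ∈ N, ∀ b ∈ N, x * a = x * b ∧ a * x = b * x)
    {a b c : S} (hnu : Nu J N a b) (hab : GreenR a b) (hca : c * a ∈ I) :
    f (c * a) = f (c * b) := by
  obtain ⟨n, hn, p, q, e1, e2⟩ := nu_to he hN hnu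
  have hBA : ∀ m' ∈ M, m' * (c * a) = m' * (c * b) := by
    intro m' hm'
    have hx : (m' * c) * p ∈ M := (hM.1.2 (m' * c) (hM.1.2 m' hm' c).2 p).2
    have hact2 : ((m' * c) * p) * e = ((m' * c) * p) * n := (hact _ hx e hN.2.1 n hn).1
    calc m' * (c * a) = (((m' * c) * p) * e) * q := by rw [← e1]; simp only [mul_assoc]
      _ = (((m' * c) * p) * n) * q := by rw [hact2]
      _ = m' * (c * b) := by rw [← e2]; simp only [mul_assoc]
  obtain ⟨v, hv⟩ := (gR_mull c hab).1
  induction v using WithOne.recOneCoe with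
  | one =>
    rw [mul_one] at hv
    rw [WithOne.coe_inj.mp hv]
  | coe v₀ =>
    have hv' : (c * a) * v₀ = c * b := by exact_mod_cast hv
    have hBRA : GreenR (f (c * b)) (f (c * a)) := by rw [← hv']; exact fR1 hM hMs hI hf hca v₀
    have hAM : f (c * a) ∈ M := hf.1 _ hca
    obtain ⟨h, hh, hhA⟩ := M4L hM hMs hAM
    have hcb : c * b ∈ I := by rw [← hv']; exact (hI.2 _ hca v₀).2
    obtain ⟨w, hw⟩ := hBRA.2
    induction w using WithOne.recOneCoe with
    | one =>
      rw [mul_one] at hw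
      exact WithOne.coe_inj.mp hw
    | coe w₀ =>
      have hw' : f (c * a) * w₀ = f (c * b) := by exact_mod_cast hw
      have hhB : h * f (c * b) = f (c * b) := by rw [← hw', ← mul_assoc, hhA]
      calc f (c * a) = h * f (c * a) := hhA.symm
        _ = h * (c * a) := (fmx hM hI hf hca hh).symm
        _ = h * (c * b) := hBA h hh
        _ = h * f (c * b) := fmx hM hI hf hcb hh
        _ = f (c * b) := hhB

/-- collapse under right multiplication into `I` -/
lemma clpR (he : e * e = e) (hM : IsMinIdeal M) (hMs : StableSet M) (hI : IsIdeal I)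
    (hf : IsRetraction I M f) (hN : IsNormalIn N {x : S | GreenH x e} e)
    (hact : ∀ x ∈ M, ∀ a ∈ N, ∀ b ∈ N, x * a = x * b ∧ a * x = b * x)
    {a b c : S} (hnu : Nu J N a b) (hab : GreenL a b) (hac : a * c ∈ I) :
    f (a * c) = f (b * c) := by
  obtain ⟨n, hn, p, q, e1, e2⟩ := nu_to he hN hnu
  have hAB : ∀ m' ∈ M, (a * c) * m' = (b * c) * m' := by
    intro m' hm'
    have hx : q * (c * m') ∈ M := (hM.1.2 (c * m') (hM.1.2 m' hm' c).1 q).1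
    have hact1 : e * (q * (c * m')) = n * (q * (c * m')) := (hact _ hx e hN.2.1 n hn).2
    calc (a * c) * m' = p * (e * (q * (c * m'))) := by rw [← e1]; simp only [mul_assoc]
      _ = p * (n * (q * (c * m'))) := by rw [hact1]
      _ = (b * c) * m' := by rw [← e2]; simp only [mul_assoc]
  obtain ⟨v, hv⟩ := (gL_mulr c hab).1
  induction v using WithOne.recOneCoe with
  | one =>
    rw [one_mul] at hv
    rw [WithOne.coe_inj.mp hv]
  | coe v₀ =>
    have hv' : v₀ * (a * c) = b * c := by exact_mod_cast hv
    have hBLA : GreenL (f (b * c)) (f (a * c)) := by rw [← hv']; exact fL1 hM hMs hI hf hac v₀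
    have hAM : f (a * c) ∈ M := hf.1 _ hac
    obtain ⟨k, hk, hkA⟩ := M4R hM hMs hAM
    have hbc : b * c ∈ I := by rw [← hv']; exact (hI.2 _ hac v₀).1
    obtain ⟨w, hw⟩ := hBLA.2
    induction w using WithOne.recOneCoe with
    | one =>
      rw [one_mul] at hw
      exact WithOne.coe_inj.mp hw
    | coe w₀ =>
      have hw' : w₀ * f (a * c) = f (b * c) := by exact_mod_cast hw
      have hkB : f (b * c) * k = f (b * c) := by rw [← hw', mul_assoc, hkA]
      calc f (a * c) = f (a * c) * k := hkA.symm
        _ = (a * c) * k := (fxm hM hI hf hac hk).symm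
        _ = (b * c) * k := hAB k hk
        _ = f (b * c) * k := fxm hM hI hf hbc hk
        _ = f (b * c) := hkB

end Aux6

section Aux7

variable {M I J N : Set S} {e : S} {f : S → S}

lemma genCong (he : e * e = e) (heJ : e ∈ J) (hJ : IsJClass J) (hJs : StableSet J)
    (hmin : MinimalJClassOutside J I) (hI : IsIdeal I)
    (hN : IsNormalIn N {x : S | GreenH x e} e)
    (hM : IsMinIdeal M) (hMs : StableSet M) (hf : IsRetraction I M f)
    (hact : ∀ x ∈ M, ∀ a ∈ N, ∀ b ∈ N, x * a = x * b ∧ a * x = b * x)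
    (T : S → S → Prop)
    (hTrefl : ∀ a, T a a) (hTsymm : ∀ {a b}, T a b → T b a)
    (hTtrans : ∀ {a b c}, T a b → T b c → T a c)
    (hTL : ∀ c : S, ∀ {x y : S}, x ∈ I → y ∈ I → T (f x) (f y) → T (f (c * x)) (f (c * y)))
    (hTR : ∀ c : S, ∀ {x y : S}, x ∈ I → y ∈ I → T (f x) (f y) → T (f (x * c)) (f (y * c))) :
    IsCongruence (fun x y => x = y ∨ Nu J N x y ∨ (x ∈ I ∧ y ∈ I ∧ T (f x) (f y))) := by
  constructor
  · constructor
    · exact fun x => Or.inl rfl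
    · rintro a b (rfl | hnu | ⟨ha, hb, hT⟩)
      · exact Or.inl rfl
      · exact Or.inr (Or.inl (nu_symm hnu))
      · exact Or.inr (Or.inr ⟨hb, ha, hTsymm hT⟩)
    · rintro a b c hab hbc
      rcases hab with rfl | hnu1 | ⟨ha, hb1, hT1⟩
      · exact hbc
      · rcases hbc with rfl | hnu2 | ⟨hb2, hc, hT2⟩
        · exact Or.inr (Or.inl hnu1)
        · exact Or.inr (Or.inl (nu_trans he heJ hJ hJs hmin hI hN hnu1 hnu2))
        · exact absurd hb2 (hmin.1 _ hnu1.2.1)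
      · rcases hbc with rfl | hnu2 | ⟨hb2, hc, hT2⟩
        · exact Or.inr (Or.inr ⟨ha, hb1, hT1⟩)
        · exact absurd hb1 (hmin.1 _ hnu2.1)
        · exact Or.inr (Or.inr ⟨ha, hc, hTtrans hT1 hT2⟩)
  · intro a b c hab
    rcases hab with rfl | hnu | ⟨ha, hb, hT⟩
    · exact ⟨Or.inl rfl, Or.inl rfl⟩
    · have habH := nuH he heJ hJ hJs hmin hI hN hnu
      constructor
      · by_cases hca : c * a ∈ I
        · have hfe := clpL he hM hMs hI hf hN hact hnu habH.1 hca
          obtain ⟨v, hv⟩ := (gR_mull c habH.1).1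
          induction v using WithOne.recOneCoe with
          | one =>
            rw [mul_one] at hv
            exact Or.inl (WithOne.coe_inj.mp hv)
          | coe v₀ =>
            have hv' : (c * a) * v₀ = c * b := by exact_mod_cast hv
            have hcb : c * b ∈ I := by rw [← hv']; exact (hI.2 _ hca v₀).2
            exact Or.inr (Or.inr ⟨hca, hcb, by rw [hfe]; exact hTrefl _⟩)
        · have hcaJ : c * a ∈ J := Jclosed hmin hnu.1 (c : WithOne S) 1
            (by rw [mul_one, ← WithOne.coe_mul]) hca
          have hcbI : c * b ∉ I := by
            intro hcb
            apply hca
            obtain ⟨v, hv⟩ := (gR_mull c habH.1).2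
            exact Iabs hI hcb 1 v (by rw [one_mul, hv])
          have hcbJ : c * b ∈ J := Jclosed hmin hnu.2.1 (c : WithOne S) 1
            (by rw [mul_one, ← WithOne.coe_mul]) hcbI
          obtain ⟨-, -, x, hx, y, hy, s, t, hs1, hs2⟩ := hnu
          refine Or.inr (Or.inl ⟨hcaJ, hcbJ, x, hx, y, hy, (c : WithOne S) * s, t, ?_, ?_⟩)
          · push_cast
            rw [← hs1]
            simp only [mul_assoc]
          · push_cast
            rw [← hs2]
            simp only [mul_assoc]
      · by_cases hac : a * c ∈ I
        · have hfe := clpR he hM hMs hI hf hN hact hnu habH.2 hac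
          obtain ⟨v, hv⟩ := (gL_mulr c habH.2).1
          induction v using WithOne.recOneCoe with
          | one =>
            rw [one_mul] at hv
            exact Or.inl (WithOne.coe_inj.mp hv)
          | coe v₀ =>
            have hv' : v₀ * (a * c) = b * c := by exact_mod_cast hv
            have hbc : b * c ∈ I := by rw [← hv']; exact (hI.2 _ hac v₀).1
            exact Or.inr (Or.inr ⟨hac, hbc, by rw [hfe]; exact hTrefl _⟩)
        · have hacJ : a * c ∈ J := Jclosed hmin hnu.1 1 (c : WithOne S)
            (by rw [one_mul, ← WithOne.coe_mul]) hac
          have hbcI : b * c ∉ I := by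
            intro hbc
            apply hac
            obtain ⟨v, hv⟩ := (gL_mulr c habH.2).2
            exact Iabs hI hbc v 1 (by rw [mul_one, hv])
          have hbcJ : b * c ∈ J := Jclosed hmin hnu.2.1 1 (c : WithOne S)
            (by rw [one_mul, ← WithOne.coe_mul]) hbcI
          obtain ⟨-, -, x, hx, y, hy, s, t, hs1, hs2⟩ := hnu
          refine Or.inr (Or.inl ⟨hacJ, hbcJ, x, hx, y, hy, s, t * (c : WithOne S), ?_, ?_⟩)
          · push_cast
            rw [← hs1]
            simp only [mul_assoc]
          · push_cast
            rw [← hs2]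
            simp only [mul_assoc]
    · constructor
      · exact Or.inr (Or.inr ⟨(hI.2 a ha c).1, (hI.2 b hb c).1, hTL c ha hb hT⟩)
      · exact Or.inr (Or.inr ⟨(hI.2 a ha c).2, (hI.2 b hb c).2, hTR c ha hb hT⟩)

end Aux7

section Aux8

variable {M I J N : Set S} {e : S} {f : S → S}

lemma rCong (he : e * e = e) (heJ : e ∈ J) (hJ : IsJClass J) (hJs : StableSet J)
    (hmin : MinimalJClassOutside J I) (hI : IsIdeal I)
    (hN : IsNormalIn N {x : S | GreenH x e} e) :
    IsCongruence (RRel I J N) := by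
  constructor
  · constructor
    · exact fun x => Or.inl rfl
    · rintro a b (rfl | hnu | ⟨ha, hb⟩)
      · exact Or.inl rfl
      · exact Or.inr (Or.inl (nu_symm hnu))
      · exact Or.inr (Or.inr ⟨hb, ha⟩)
    · rintro a b c hab hbc
      rcases hab with rfl | hnu1 | ⟨ha, hb1⟩
      · exact hbc
      · rcases hbc with rfl | hnu2 | ⟨hb2, hc⟩
        · exact Or.inr (Or.inl hnu1)
        · exact Or.inr (Or.inl (nu_trans he heJ hJ hJs hmin hI hN hnu1 hnu2))
        · exact absurd hb2 (hmin.1 _ hnu1.2.1)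
      · rcases hbc with rfl | hnu2 | ⟨hb2, hc⟩
        · exact Or.inr (Or.inr ⟨ha, hb1⟩)
        · exact absurd hb1 (hmin.1 _ hnu2.1)
        · exact Or.inr (Or.inr ⟨ha, hc⟩)
  · intro a b c hab
    rcases hab with rfl | hnu | ⟨ha, hb⟩
    · exact ⟨Or.inl rfl, Or.inl rfl⟩
    · have habH := nuH he heJ hJ hJs hmin hI hN hnu
      constructor
      · by_cases hca : c * a ∈ I
        · obtain ⟨v, hv⟩ := (gR_mull c habH.1).1
          induction v using WithOne.recOneCoe with
          | one =>
            rw [mul_one] at hv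
            exact Or.inl (WithOne.coe_inj.mp hv)
          | coe v₀ =>
            have hv' : (c * a) * v₀ = c * b := by exact_mod_cast hv
            have hcb : c * b ∈ I := by rw [← hv']; exact (hI.2 _ hca v₀).2
            exact Or.inr (Or.inr ⟨hca, hcb⟩)
        · have hcaJ : c * a ∈ J := Jclosed hmin hnu.1 (c : WithOne S) 1
            (by rw [mul_one, ← WithOne.coe_mul]) hca
          have hcbI : c * b ∉ I := by
            intro hcb
            apply hca
            obtain ⟨v, hv⟩ := (gR_mull c habH.1).2
            exact Iabs hI hcb 1 v (by rw [one_mul, hv])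
          have hcbJ : c * b ∈ J := Jclosed hmin hnu.2.1 (c : WithOne S) 1
            (by rw [mul_one, ← WithOne.coe_mul]) hcbI
          obtain ⟨-, -, x, hx, y, hy, s, t, hs1, hs2⟩ := hnu
          refine Or.inr (Or.inl ⟨hcaJ, hcbJ, x, hx, y, hy, (c : WithOne S) * s, t, ?_, ?_⟩)
          · push_cast
            rw [← hs1]
            simp only [mul_assoc]
          · push_cast
            rw [← hs2]
            simp only [mul_assoc]
      · by_cases hac : a * c ∈ I
        · obtain ⟨v, hv⟩ := (gL_mulr c habH.2).1
          induction v using WithOne.recOneCoe with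
          | one =>
            rw [one_mul] at hv
            exact Or.inl (WithOne.coe_inj.mp hv)
          | coe v₀ =>
            have hv' : v₀ * (a * c) = b * c := by exact_mod_cast hv
            have hbc : b * c ∈ I := by rw [← hv']; exact (hI.2 _ hac v₀).1
            exact Or.inr (Or.inr ⟨hac, hbc⟩)
        · have hacJ : a * c ∈ J := Jclosed hmin hnu.1 1 (c : WithOne S)
            (by rw [one_mul, ← WithOne.coe_mul]) hac
          have hbcI : b * c ∉ I := by
            intro hbc
            apply hac
            obtain ⟨v, hv⟩ := (gL_mulr c habH.2).2
            exact Iabs hI hbc v 1 (by rw [mul_one, hv])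
          have hbcJ : b * c ∈ J := Jclosed hmin hnu.2.1 1 (c : WithOne S)
            (by rw [one_mul, ← WithOne.coe_mul]) hbcI
          obtain ⟨-, -, x, hx, y, hy, s, t, hs1, hs2⟩ := hnu
          refine Or.inr (Or.inl ⟨hacJ, hbcJ, x, hx, y, hy, s, t * (c : WithOne S), ?_, ?_⟩)
          · push_cast
            rw [← hs1]
            simp only [mul_assoc]
          · push_cast
            rw [← hs2]
            simp only [mul_assoc]
    · exact ⟨Or.inr (Or.inr ⟨(hI.2 a ha c).1, (hI.2 b hb c).1⟩),
        Or.inr (Or.inr ⟨(hI.2 a ha c).2, (hI.2 b hb c).2⟩)⟩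

end Aux8

end SG

/-- Let `S` be a semigroup with a stable minimal ideal `M` having at
least two `R`-classes and at least two `L`-classes, and let `C = (I, N)` be a retractable
IN-pair with retraction `f : I → M`.  Then `λ_C` and `ρ_C` are incomparable congruences,
their intersection is `μ_C` and their join is `R_C`. -/
theorem stmt10 {S : Type*} [Semigroup S] (M I J N : Set S) (e : S) (f : S → S)
    (hM : SG.IsMinIdeal M) (hMs : SG.StableSet M)
    (hR2 : ∃ x ∈ M, ∃ y ∈ M, ¬ SG.GreenR x y)
    (hL2 : ∃ x ∈ M, ∃ y ∈ M, ¬ SG.GreenL x y)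
    (hI : SG.IsIdeal I) (hf : SG.IsRetraction I M f)
    (hJ : SG.IsJClass J) (hJs : SG.StableSet J) (hJr : SG.RegularSet J)
    (hmin : SG.MinimalJClassOutside J I)
    (he : e * e = e) (heJ : e ∈ J)
    (hN : SG.IsNormalIn N {x : S | SG.GreenH x e} e)
    (hact : ∀ x ∈ M, ∀ a ∈ N, ∀ b ∈ N, x * a = x * b ∧ a * x = b * x) :
    SG.IsCongruence (SG.LamRel I J N f) ∧
    SG.IsCongruence (SG.RhoRel I J N f) ∧
    SG.IsCongruence (SG.MuRel I J N f) ∧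
    SG.IsCongruence (SG.RRel I J N) ∧
    (¬ ∀ x y : S, SG.LamRel I J N f x y → SG.RhoRel I J N f x y) ∧
    (¬ ∀ x y : S, SG.RhoRel I J N f x y → SG.LamRel I J N f x y) ∧
    (∀ x y : S, (SG.LamRel I J N f x y ∧ SG.RhoRel I J N f x y) ↔ SG.MuRel I J N f x y) ∧
    (∀ x y : S, SG.LamRel I J N f x y → SG.RRel I J N x y) ∧
    (∀ x y : S, SG.RhoRel I J N f x y → SG.RRel I J N x y) ∧
    (∀ θ : S → S → Prop, SG.IsCongruence θ →
      (∀ x y : S, SG.LamRel I J N f x y → θ x y) →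
      (∀ x y : S, SG.RhoRel I J N f x y → θ x y) →
      ∀ x y : S, SG.RRel I J N x y → θ x y) := by
  have hMI : M ⊆ I := hM.2 I hI
  have hLamC : SG.IsCongruence (SG.LamRel I J N f) := by
    exact SG.genCong he heJ hJ hJs hmin hI hN hM hMs hf hact SG.GreenL
      SG.gL_refl (fun h => SG.gL_symm h) (fun h1 h2 => SG.gL_trans h1 h2)
      (fun c {x y} hx hy hT => SG.gL_trans (SG.fL1 hM hMs hI hf hx c)
        (SG.gL_trans hT (SG.gL_symm (SG.fL1 hM hMs hI hf hy c))))
      (fun c {x y} hx hy hT => SG.gL_trans (SG.fL2 hM hMs hI hf hx c)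
        (SG.gL_trans (SG.gL_mulr c hT) (SG.gL_symm (SG.fL2 hM hMs hI hf hy c))))
  have hRhoC : SG.IsCongruence (SG.RhoRel I J N f) := by
    exact SG.genCong he heJ hJ hJs hmin hI hN hM hMs hf hact SG.GreenR
      SG.gR_refl (fun h => SG.gR_symm h) (fun h1 h2 => SG.gR_trans h1 h2)
      (fun c {x y} hx hy hT => SG.gR_trans (SG.fR2 hM hMs hI hf hx c)
        (SG.gR_trans (SG.gR_mull c hT) (SG.gR_symm (SG.fR2 hM hMs hI hf hy c))))
      (fun c {x y} hx hy hT => SG.gR_trans (SG.fR1 hM hMs hI hf hx c)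
        (SG.gR_trans hT (SG.gR_symm (SG.fR1 hM hMs hI hf hy c))))
  have hMuC : SG.IsCongruence (SG.MuRel I J N f) := by
    exact SG.genCong he heJ hJ hJs hmin hI hN hM hMs hf hact SG.GreenH
      SG.gH_refl (fun h => SG.gH_symm h) (fun h1 h2 => SG.gH_trans h1 h2)
      (fun c {x y} hx hy hT =>
        ⟨SG.gR_trans (SG.fR2 hM hMs hI hf hx c)
          (SG.gR_trans (SG.gR_mull c hT.1) (SG.gR_symm (SG.fR2 hM hMs hI hf hy c))),
         SG.gL_trans (SG.fL1 hM hMs hI hf hx c)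
          (SG.gL_trans hT.2 (SG.gL_symm (SG.fL1 hM hMs hI hf hy c)))⟩)
      (fun c {x y} hx hy hT =>
        ⟨SG.gR_trans (SG.fR1 hM hMs hI hf hx c)
          (SG.gR_trans hT.1 (SG.gR_symm (SG.fR1 hM hMs hI hf hy c))),
         SG.gL_trans (SG.fL2 hM hMs hI hf hx c)
          (SG.gL_trans (SG.gL_mulr c hT.2) (SG.gL_symm (SG.fL2 hM hMs hI hf hy c)))⟩)
  have hRC : SG.IsCongruence (SG.RRel I J N) := SG.rCong he heJ hJ hJs hmin hI hN
  refine ⟨hLamC, hRhoC, hMuC, hRC, ?_, ?_, ?_, ?_, ?_, ?_⟩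
  · -- λ not contained in ρ
    obtain ⟨x₀, hx₀, y₀, hy₀, hR⟩ := hR2
    intro hsub
    have hq : y₀ * x₀ ∈ M := (hM.1.2 x₀ hx₀ y₀).1
    have hqR : SG.GreenR (y₀ * x₀) y₀ := SG.M1R hM hMs hy₀ x₀
    have hLam : SG.LamRel I J N f x₀ (y₀ * x₀) := Or.inr (Or.inr ⟨hMI hx₀, hMI hq,
      by rw [hf.2.2 _ hx₀, hf.2.2 _ hq]; exact SG.gL_symm (SG.M1L hM hMs hx₀ y₀)⟩)
    rcases hsub _ _ hLam with heq | hnu | ⟨-, -, hRf⟩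
    · exact hR (by rw [heq]; exact hqR)
    · exact hmin.1 _ hnu.1 (hMI hx₀)
    · rw [hf.2.2 _ hx₀, hf.2.2 _ hq] at hRf
      exact hR (SG.gR_trans hRf hqR)
  · -- ρ not contained in λ
    obtain ⟨x₁, hx₁, y₁, hy₁, hL⟩ := hL2
    intro hsub
    have hq : x₁ * y₁ ∈ M := (hM.1.2 y₁ hy₁ x₁).1
    have hqL : SG.GreenL (x₁ * y₁) y₁ := SG.M1L hM hMs hy₁ x₁
    have hRho : SG.RhoRel I J N f x₁ (x₁ * y₁) := Or.inr (Or.inr ⟨hMI hx₁, hMI hq,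
      by rw [hf.2.2 _ hx₁, hf.2.2 _ hq]; exact SG.gR_symm (SG.M1R hM hMs hx₁ y₁)⟩)
    rcases hsub _ _ hRho with heq | hnu | ⟨-, -, hLf⟩
    · exact hL (by rw [heq]; exact hqL)
    · exact hmin.1 _ hnu.1 (hMI hx₁)
    · rw [hf.2.2 _ hx₁, hf.2.2 _ hq] at hLf
      exact hL (SG.gL_trans hLf hqL)
  · -- intersection
    intro x y
    constructor
    · rintro ⟨hlam, hrho⟩
      rcases hlam with rfl | hnu | ⟨hx, hy, hLf⟩
      · exact Or.inl rfl
      · exact Or.inr (Or.inl hnu)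
      · rcases hrho with rfl | hnu2 | ⟨-, -, hRf⟩
        · exact Or.inl rfl
        · exact absurd hx (hmin.1 _ hnu2.1)
        · exact Or.inr (Or.inr ⟨hx, hy, hRf, hLf⟩)
    · rintro (rfl | hnu | ⟨hx, hy, hH⟩)
      · exact ⟨Or.inl rfl, Or.inl rfl⟩
      · exact ⟨Or.inr (Or.inl hnu), Or.inr (Or.inl hnu)⟩
      · exact ⟨Or.inr (Or.inr ⟨hx, hy, hH.2⟩), Or.inr (Or.inr ⟨hx, hy, hH.1⟩)⟩
  · -- λ ⊆ R
    rintro x y (rfl | hnu | ⟨hx, hy, -⟩)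
    · exact Or.inl rfl
    · exact Or.inr (Or.inl hnu)
    · exact Or.inr (Or.inr ⟨hx, hy⟩)
  · -- ρ ⊆ R
    rintro x y (rfl | hnu | ⟨hx, hy, -⟩)
    · exact Or.inl rfl
    · exact Or.inr (Or.inl hnu)
    · exact Or.inr (Or.inr ⟨hx, hy⟩)
  · -- join
    intro θ hθ hol hor x y hxy
    rcases hxy with rfl | hnu | ⟨hx, hy⟩
    · exact hθ.1.refl x
    · exact hol _ _ (Or.inr (Or.inl hnu))
    · have hfx : f x ∈ M := hf.1 x hx
      have hfy : f y ∈ M := hf.1 y hy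
      have hz : f x * f y ∈ M := (hM.1.2 (f y) hfy (f x)).1
      have s1 : θ x (f x) := hol _ _ (Or.inr (Or.inr ⟨hx, hMI hfx,
        by rw [hf.2.2 _ hfx]; exact SG.gL_refl _⟩))
      have s2 : θ (f x) (f x * f y) := hor _ _ (Or.inr (Or.inr ⟨hMI hfx, hMI hz,
        by rw [hf.2.2 _ hfx, hf.2.2 _ hz]; exact SG.gR_symm (SG.M1R hM hMs hfx (f y))⟩))
      have s3 : θ (f x * f y) (f y) := hol _ _ (Or.inr (Or.inr ⟨hMI hz, hMI hfy,
        by rw [hf.2.2 _ hz, hf.2.2 _ hfy]; exact SG.M1L hM hMs hfy (f x)⟩))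
      have s4 : θ (f y) y := hol _ _ (Or.inr (Or.inr ⟨hMI hfy, hy,
        by rw [hf.2.2 _ hfy]; exact SG.gL_refl _⟩))
      exact hθ.1.trans (hθ.1.trans (hθ.1.trans s1 s2) s3) s4
end

section
/- In the partition monoid P_n, the map sending each partition α of rank at most 1 to the unique partition α̂ of rank 0 with the same kernel and cokernel as α is a retraction from the ideal I₁ = {α ∈ P_n : rank(α) ≤ 1} onto the minimal ideal I₀ = {α ∈ P_n : rank(α) = 0}; that is, it is a homomorphism fixing I₀ pointwise. -/
namespace PM

/-- The points `{1,…,n} ∪ {1',…,n'}`: `Sum.inl` is the top row, `Sum.inr` the bottom row. -/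
abbrev Pt (n : ℕ) := Fin n ⊕ Fin n

/-- An element of the partition monoid `P_n`: a set partition of `Pt n`,
encoded as an equivalence relation (setoid). -/
abbrev Ptn (n : ℕ) := Setoid (Pt n)

/-- Embedding of the first factor (as top and middle layer) into the three-layer set. -/
def iota1 {n : ℕ} : Pt n → (Fin n ⊕ Pt n)
  | Sum.inl i => Sum.inl i
  | Sum.inr i => Sum.inr (Sum.inl i)

/-- Embedding of the second factor (as middle and bottom layer). -/
def iota2 {n : ℕ} : Pt n → (Fin n ⊕ Pt n)
  | Sum.inl i => Sum.inr (Sum.inl i)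
  | Sum.inr i => Sum.inr (Sum.inr i)

/-- Embedding of the product (top and bottom layer). -/
def iota3 {n : ℕ} : Pt n → (Fin n ⊕ Pt n)
  | Sum.inl i => Sum.inl i
  | Sum.inr i => Sum.inr (Sum.inr i)

/-- The edges of the product graph Π(α,β) on the three-layer vertex set. -/
def mulBase {n : ℕ} (α β : Ptn n) (a b : Fin n ⊕ Pt n) : Prop :=
  (∃ x y : Pt n, α.r x y ∧ iota1 x = a ∧ iota1 y = b) ∨
    (∃ x y : Pt n, β.r x y ∧ iota2 x = a ∧ iota2 y = b)

/-- The product in the partition monoid: `x, y` lie in the same block of `α * β`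
iff they are connected by a path in the product graph. -/
def pmul {n : ℕ} (α β : Ptn n) : Ptn n :=
  Setoid.comap iota3 (Relation.EqvGen.setoid (mulBase α β))

/-- The identity partition, with blocks `{i, i'}`. -/
def pone (n : ℕ) : Ptn n := Setoid.ker (Sum.elim id id)

/-- The domain: top points lying in a transversal block. -/
def dom {n : ℕ} (α : Ptn n) : Set (Fin n) := {i | ∃ j, α.r (Sum.inl i) (Sum.inr j)}

/-- The codomain: bottom points lying in a transversal block. -/
def codom {n : ℕ} (α : Ptn n) : Set (Fin n) := {j | ∃ i, α.r (Sum.inl i) (Sum.inr j)}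

/-- The kernel: the induced equivalence on the top row. -/
def kerr {n : ℕ} (α : Ptn n) (i j : Fin n) : Prop := α.r (Sum.inl i) (Sum.inl j)

/-- The cokernel: the induced equivalence on the bottom row. -/
def cokerr {n : ℕ} (α : Ptn n) (i j : Fin n) : Prop := α.r (Sum.inr i) (Sum.inr j)

/-- The rank: the number of transversal blocks, counted via the minimal
top point of each transversal block. -/
noncomputable def rank {n : ℕ} (α : Ptn n) : ℕ :=
  Set.ncard {i : Fin n | i ∈ dom α ∧ ∀ j ∈ dom α, kerr α i j → i ≤ j}

/-- Green's R relation on `P_n` (a monoid, so no extra identity is needed). -/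
def PGreenR {n : ℕ} (α β : Ptn n) : Prop :=
  (∃ γ, pmul α γ = β) ∧ ∃ γ, pmul β γ = α

/-- Green's L relation on `P_n`. -/
def PGreenL {n : ℕ} (α β : Ptn n) : Prop :=
  (∃ γ, pmul γ α = β) ∧ ∃ γ, pmul γ β = α

/-- Green's J relation on `P_n`. -/
def PGreenJ {n : ℕ} (α β : Ptn n) : Prop :=
  (∃ γ δ, pmul (pmul γ α) δ = β) ∧ ∃ γ δ, pmul (pmul γ β) δ = α

/-- The involution `α ↦ α*`, reflecting in the horizontal axis. -/
def star {n : ℕ} (α : Ptn n) : Ptn n := Setoid.comap Sum.swap α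

/-- `α̂` : the unique partition of rank 0 with the same kernel and cokernel as `α`:
it relates two points iff they lie on the same row and are `α`-related. -/
def hat {n : ℕ} (α : Ptn n) : Ptn n where
  r x y := α.r x y ∧ x.isLeft = y.isLeft
  iseqv :=
    ⟨fun x => ⟨α.iseqv.refl x, rfl⟩,
     fun h => ⟨α.iseqv.symm h.1, h.2.symm⟩,
     fun h h' => ⟨α.iseqv.trans h.1 h'.1, h.2.trans h'.2⟩⟩

/-- `α` is a Brauer element: every block has size exactly 2. -/
def IsBrauer {n : ℕ} (α : Ptn n) : Prop :=
  ∀ x : Pt n, ∃ y, y ≠ x ∧ α.r x y ∧ ∀ z, α.r x z → z = x ∨ z = y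

/-- Position of a point in the boundary order `1, …, n, n', …, 1'`. -/
def ordPos {n : ℕ} : Pt n → ℕ
  | Sum.inl i => i.val
  | Sum.inr j => 2 * n - 1 - j.val

/-- `α` is planar: no two of its blocks cross with respect to the boundary order. -/
def IsPlanar {n : ℕ} (α : Ptn n) : Prop :=
  ∀ w x y z : Pt n, ordPos w < ordPos x → ordPos x < ordPos y → ordPos y < ordPos z →
    α.r w y → α.r x z → α.r w x

end PM


namespace PMAux
open PM

variable {n : ℕ}

/-- The set whose cardinality is the rank. -/
def rset (α : Ptn n) : Set (Fin n) :=
  {i : Fin n | i ∈ dom α ∧ ∀ j ∈ dom α, kerr α i j → i ≤ j}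

lemma rank_eq (α : Ptn n) : rank α = (rset α).ncard := rfl

lemma dom_of_kerr {α : Ptn n} {i j : Fin n} (h : kerr α i j) (hj : j ∈ dom α) :
    i ∈ dom α := by
  obtain ⟨k, hk⟩ := hj
  exact ⟨k, α.trans h hk⟩

lemma exists_min_class {α : Ptn n} {i : Fin n} (hi : i ∈ dom α) :
    ∃ m, m ∈ rset α ∧ kerr α i m := by
  classical
  set S : Set (Fin n) := {k | k ∈ dom α ∧ kerr α i k} with hS
  have hfin : S.Finite := Set.toFinite _
  have hne : S.Nonempty := ⟨i, hi, α.refl _⟩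
  obtain ⟨m, hm, hmin⟩ := Set.exists_min_image S id hfin hne
  refine ⟨m, ⟨hm.1, fun j hj hkj => ?_⟩, hm.2⟩
  exact hmin j ⟨hj, α.trans hm.2 hkj⟩

lemma rank_eq_zero_dom {α : Ptn n} (h : rank α = 0) : ∀ i, i ∉ dom α := by
  intro i hi
  obtain ⟨m, hm, _⟩ := exists_min_class hi
  have : 0 < (rset α).ncard := (Set.ncard_pos (Set.toFinite _)).2 ⟨m, hm⟩
  rw [rank_eq] at h; omega

lemma rank_le_one_kerr {α : Ptn n} (h : rank α ≤ 1) :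
    ∀ i j, i ∈ dom α → j ∈ dom α → kerr α i j := by
  intro i j hi hj
  by_contra hij
  obtain ⟨mi, hmi, hki⟩ := exists_min_class hi
  obtain ⟨mj, hmj, hkj⟩ := exists_min_class hj
  have hne : mi ≠ mj := by
    rintro rfl
    exact hij (α.trans hki (α.symm hkj))
  have : 1 < (rset α).ncard :=
    (Set.one_lt_ncard (Set.toFinite _)).2 ⟨mi, hmi, mj, hmj, hne⟩
  rw [rank_eq] at h; omega

lemma rank_le_one_cokerr {β : Ptn n} (h : rank β ≤ 1) :
    ∀ i j, i ∈ codom β → j ∈ codom β → cokerr β i j := by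
  rintro i j ⟨i', hi⟩ ⟨j', hj⟩
  have hk : kerr β i' j' := rank_le_one_kerr h i' j' ⟨i, hi⟩ ⟨j, hj⟩
  exact β.trans (β.symm hi) (β.trans hk hj)

/-- Mixed pairs are never `hat`-related. -/
lemma hat_isLeft {α : Ptn n} {x y : Pt n} (h : (hat α).r x y) :
    x.isLeft = y.isLeft := h.2

lemma dom_hat {α : Ptn n} : ∀ i, i ∉ dom (hat α) := by
  rintro i ⟨j, h⟩
  simpa using h.2

lemma rank_hat_zero (α : Ptn n) : rank (hat α) = 0 := by
  have : rset (hat α) = ∅ := by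
    ext i
    simp only [Set.mem_empty_iff_false, iff_false]
    rintro ⟨hi, -⟩
    exact dom_hat i hi
  rw [rank_eq, this, Set.ncard_empty]

lemma kerr_hat (α : Ptn n) (i j : Fin n) : kerr (hat α) i j ↔ kerr α i j :=
  ⟨fun h => h.1, fun h => ⟨h, rfl⟩⟩

lemma cokerr_hat (α : Ptn n) (i j : Fin n) : cokerr (hat α) i j ↔ cokerr α i j :=
  ⟨fun h => h.1, fun h => ⟨h, rfl⟩⟩

/-- Rank-zero partitions relate no mixed pairs. -/
lemma rank_zero_isLeft {α : Ptn n} (h : rank α = 0) {x y : Pt n} (hxy : α.r x y) :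
    x.isLeft = y.isLeft := by
  cases x with
  | inl i =>
    cases y with
    | inl j => rfl
    | inr j => exact absurd ⟨j, hxy⟩ (rank_eq_zero_dom h i)
  | inr i =>
    cases y with
    | inl j => exact absurd ⟨i, α.symm hxy⟩ (rank_eq_zero_dom h j)
    | inr j => rfl

/-- Same-layer equivalence on the three-layer set. -/
def E (α β : Ptn n) : (Fin n ⊕ Pt n) → (Fin n ⊕ Pt n) → Prop
  | Sum.inl i, Sum.inl j => kerr α i j
  | Sum.inr (Sum.inl _), Sum.inr (Sum.inl _) => True
  | Sum.inr (Sum.inr i), Sum.inr (Sum.inr j) => cokerr β i j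
  | _, _ => False

/-- "Transversal-touching" predicate on the three-layer set. -/
def K (α β : Ptn n) : (Fin n ⊕ Pt n) → Prop
  | Sum.inl i => i ∈ dom α
  | Sum.inr (Sum.inl _) => True
  | Sum.inr (Sum.inr j) => j ∈ codom β

lemma E_refl (α β : Ptn n) (a : Fin n ⊕ Pt n) : E α β a a := by
  rcases a with i | p | j
  · exact α.refl _
  · trivial
  · exact β.refl _

lemma E_symm {α β : Ptn n} {a b : Fin n ⊕ Pt n} (h : E α β a b) : E α β b a := by
  rcases a with i | p | j <;> rcases b with i' | p' | j' <;>
    first | exact α.symm h | exact β.symm h | trivial | exact h.elim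

lemma E_trans {α β : Ptn n} {a b c : Fin n ⊕ Pt n}
    (h1 : E α β a b) (h2 : E α β b c) : E α β a c := by
  rcases a with i | p | j <;> rcases b with i' | p' | j' <;> rcases c with i'' | p'' | j'' <;>
    first | exact α.trans h1 h2 | exact β.trans h1 h2 | trivial | exact h1.elim | exact h2.elim

lemma K_of_E {α β : Ptn n} {a b : Fin n ⊕ Pt n} (h : E α β a b) (hb : K α β b) :
    K α β a := by
  rcases a with i | p | j <;> rcases b with i' | p' | j' <;>
    first
      | exact dom_of_kerr h hb
      | (obtain ⟨k, hk⟩ := hb; exact ⟨k, β.trans hk (β.symm h)⟩)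
      | trivial
      | exact h.elim

/-- Upper bound: every edge of the product graph lies in `E ∨ (K ∧ K)`. -/
lemma mulBase_bound {α β : Ptn n} {a b : Fin n ⊕ Pt n} (h : mulBase α β a b) :
    E α β a b ∨ (K α β a ∧ K α β b) := by
  rcases h with ⟨x, y, hxy, ha, hb⟩ | ⟨x, y, hxy, ha, hb⟩ <;> subst ha <;> subst hb
  · rcases x with i | p <;> rcases y with j | q
    · exact Or.inl hxy
    · exact Or.inr ⟨⟨q, hxy⟩, trivial⟩
    · exact Or.inr ⟨trivial, ⟨p, α.symm hxy⟩⟩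
    · exact Or.inl trivial
  · rcases x with p | i <;> rcases y with q | j
    · exact Or.inl trivial
    · exact Or.inr ⟨trivial, ⟨p, hxy⟩⟩
    · exact Or.inr ⟨⟨q, β.symm hxy⟩, trivial⟩
    · exact Or.inl hxy

lemma eqvGen_bound {α β : Ptn n} {a b : Fin n ⊕ Pt n}
    (h : Relation.EqvGen (mulBase α β) a b) :
    E α β a b ∨ (K α β a ∧ K α β b) := by
  induction h with
  | rel a b h => exact mulBase_bound h
  | refl a => exact Or.inl (E_refl α β a)
  | symm a b _ ih =>
    rcases ih with h | ⟨h1, h2⟩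
    · exact Or.inl (E_symm h)
    · exact Or.inr ⟨h2, h1⟩
  | trans a b c _ _ ih1 ih2 =>
    rcases ih1 with h1 | ⟨k1, k2⟩ <;> rcases ih2 with h2 | ⟨k2', k3⟩
    · exact Or.inl (E_trans h1 h2)
    · exact Or.inr ⟨K_of_E h1 k2', k3⟩
    · exact Or.inr ⟨k1, K_of_E (E_symm h2) k2⟩
    · exact Or.inr ⟨k1, k3⟩

lemma pmul_of_kerr {α β : Ptn n} {i j : Fin n} (h : kerr α i j) :
    kerr (pmul α β) i j :=
  Relation.EqvGen.rel _ _ (Or.inl ⟨Sum.inl i, Sum.inl j, h, rfl, rfl⟩)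

lemma pmul_of_cokerr {α β : Ptn n} {i j : Fin n} (h : cokerr β i j) :
    cokerr (pmul α β) i j :=
  Relation.EqvGen.rel _ _ (Or.inr ⟨Sum.inr i, Sum.inr j, h, rfl, rfl⟩)

lemma kerr_pmul {α β : Ptn n} (hα : rank α ≤ 1) (i j : Fin n) :
    kerr (pmul α β) i j ↔ kerr α i j := by
  refine ⟨fun h => ?_, pmul_of_kerr⟩
  rcases eqvGen_bound (α := α) (β := β) h with h' | ⟨h1, h2⟩
  · exact h'
  · exact rank_le_one_kerr hα i j h1 h2

lemma cokerr_pmul {α β : Ptn n} (hβ : rank β ≤ 1) (i j : Fin n) :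
    cokerr (pmul α β) i j ↔ cokerr β i j := by
  refine ⟨fun h => ?_, pmul_of_cokerr⟩
  rcases eqvGen_bound (α := α) (β := β) h with h' | ⟨h1, h2⟩
  · exact h'
  · exact rank_le_one_cokerr hβ i j h1 h2

lemma pmul_not_mixed {α β : Ptn n} (hα : rank α = 0) {i j : Fin n}
    (h : (pmul α β).r (Sum.inl i) (Sum.inr j)) : False := by
  rcases eqvGen_bound (α := α) (β := β) h with h' | ⟨h1, _⟩
  · exact h'
  · exact rank_eq_zero_dom hα i h1

end PMAux

/-- In the partition monoid `P_n`, the map `α ↦ α̂` sending a partition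
of rank at most 1 to the unique rank-0 partition with the same kernel and cokernel is a
retraction from the ideal `I₁ = {α : rank α ≤ 1}` onto the minimal ideal
`I₀ = {α : rank α = 0}`: it maps `I₁` into `I₀` (preserving kernel and cokernel, and
being the unique such rank-0 partition), fixes `I₀` pointwise, and is a homomorphism
on `I₁`. -/
theorem stmt11 (n : ℕ) :
    (∀ α : PM.Ptn n, PM.rank α ≤ 1 →
      PM.rank (PM.hat α) = 0 ∧
      (∀ i j : Fin n, PM.kerr (PM.hat α) i j ↔ PM.kerr α i j) ∧
      (∀ i j : Fin n, PM.cokerr (PM.hat α) i j ↔ PM.cokerr α i j) ∧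
      ∀ β : PM.Ptn n, PM.rank β = 0 →
        (∀ i j : Fin n, PM.kerr β i j ↔ PM.kerr α i j) →
        (∀ i j : Fin n, PM.cokerr β i j ↔ PM.cokerr α i j) → β = PM.hat α) ∧
    (∀ α : PM.Ptn n, PM.rank α = 0 → PM.hat α = α) ∧
    (∀ α β : PM.Ptn n, PM.rank α ≤ 1 → PM.rank β ≤ 1 →
      PM.hat (PM.pmul α β) = PM.pmul (PM.hat α) (PM.hat β)) := by
  refine ⟨?_, ?_, ?_⟩
  · intro α hα
    refine ⟨PMAux.rank_hat_zero α, PMAux.kerr_hat α, PMAux.cokerr_hat α, ?_⟩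
    intro β hβ hker hcoker
    apply Setoid.ext
    intro x y
    constructor
    · intro h
      refine ⟨?_, PMAux.rank_zero_isLeft hβ h⟩
      have hside := PMAux.rank_zero_isLeft hβ h
      cases x with
      | inl i =>
        cases y with
        | inl j => exact (hker i j).1 h
        | inr j => simp at hside
      | inr i =>
        cases y with
        | inl j => simp at hside
        | inr j => exact (hcoker i j).1 h
    · rintro ⟨h, hside⟩
      cases x with
      | inl i =>
        cases y with
        | inl j => exact (hker i j).2 h
        | inr j => simp at hside
      | inr i =>
        cases y with
        | inl j => simp at hside
        | inr j => exact (hcoker i j).2 h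
  · intro α hα
    apply Setoid.ext
    intro x y
    exact ⟨fun h => h.1, fun h => ⟨h, PMAux.rank_zero_isLeft hα h⟩⟩
  · intro α β hα hβ
    have hα' : PM.rank (PM.hat α) ≤ 1 := le_of_eq_of_le (PMAux.rank_hat_zero α) (by omega)
    have hβ' : PM.rank (PM.hat β) ≤ 1 := le_of_eq_of_le (PMAux.rank_hat_zero β) (by omega)
    apply Setoid.ext
    intro x y
    cases x with
    | inl i =>
      cases y with
      | inl j =>
        constructor
        · rintro ⟨h, -⟩
          exact (PMAux.kerr_pmul hα' i j).2 ((PMAux.kerr_hat α i j).2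
            ((PMAux.kerr_pmul hα i j).1 h))
        · intro h
          exact ⟨(PMAux.kerr_pmul hα i j).2 ((PMAux.kerr_hat α i j).1
            ((PMAux.kerr_pmul hα' i j).1 h)), rfl⟩
      | inr j =>
        constructor
        · rintro ⟨-, hside⟩
          simp at hside
        · intro h
          exact absurd h (PMAux.pmul_not_mixed (PMAux.rank_hat_zero α))
    | inr i =>
      cases y with
      | inl j =>
        constructor
        · rintro ⟨-, hside⟩
          simp at hside
        · intro h
          exact absurd ((PM.pmul (PM.hat α) (PM.hat β)).symm h)
            (PMAux.pmul_not_mixed (PMAux.rank_hat_zero α))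
      | inr j =>
        constructor
        · rintro ⟨h, -⟩
          exact (PMAux.cokerr_pmul hβ' i j).2 ((PMAux.cokerr_hat β i j).2
            ((PMAux.cokerr_pmul hβ i j).1 h))
        · intro h
          exact ⟨(PMAux.cokerr_pmul hβ i j).2 ((PMAux.cokerr_hat β i j).1
            ((PMAux.cokerr_pmul hβ' i j).1 h)), rfl⟩
end

section
/- For partitions α, β in the partition monoid P_n: α R β if and only if dom(α) = dom(β) and ker(α) = ker(β); α L β if and only if codom(α) = codom(β) and coker(α) = coker(β); and α J β if and only if rank(α) = rank(β). -/
set_option linter.unusedVariables false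
set_option maxHeartbeats 1000000


namespace PM

variable {n : ℕ}
def mid (α β : Ptn n) : Fin n → Fin n → Prop :=
  Relation.EqvGen (fun k l => cokerr α k l ∨ kerr β k l)
lemma mid_refl (α β : Ptn n) (k : Fin n) : mid α β k k := Relation.EqvGen.refl k
lemma mid_symm {α β : Ptn n} {k l} (h : mid α β k l) : mid α β l k := Relation.EqvGen.symm _ _ h
lemma mid_trans {α β : Ptn n} {k l m} (h : mid α β k l) (h' : mid α β l m) : mid α β k m :=
  Relation.EqvGen.trans _ _ _ h h'
lemma mid_coker {α β : Ptn n} {k l} (h : cokerr α k l) : mid α β k l :=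
  Relation.EqvGen.rel _ _ (Or.inl h)
lemma mid_ker {α β : Ptn n} {k l} (h : kerr β k l) : mid α β k l :=
  Relation.EqvGen.rel _ _ (Or.inr h)

section helpers
variable {α β : Ptn n}
lemma midA {i : Fin n} {k k'} (h : α.r (.inl i) (.inr k)) (h' : α.r (.inl i) (.inr k')) :
    mid α β k k' := mid_coker (α.iseqv.trans (α.iseqv.symm h) h')
lemma midB {j : Fin n} {l l'} (h : β.r (.inl l) (.inr j)) (h' : β.r (.inl l') (.inr j)) :
    mid α β l l' := mid_ker (β.iseqv.trans h (β.iseqv.symm h'))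

-- component abbreviations
def TT (α β : Ptn n) (i j : Fin n) : Prop := kerr α i j ∨
  ∃ k l, α.r (.inl i) (.inr k) ∧ mid α β k l ∧ α.r (.inl j) (.inr l)
def TM (α β : Ptn n) (i k : Fin n) : Prop := ∃ k', α.r (.inl i) (.inr k') ∧ mid α β k' k
def TB (α β : Ptn n) (i j : Fin n) : Prop :=
  ∃ k l, α.r (.inl i) (.inr k) ∧ mid α β k l ∧ β.r (.inl l) (.inr j)
def MB (α β : Ptn n) (k j : Fin n) : Prop := ∃ l, mid α β k l ∧ β.r (.inl l) (.inr j)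
def BB (α β : Ptn n) (i j : Fin n) : Prop := cokerr β i j ∨
  ∃ k l, β.r (.inl k) (.inr i) ∧ mid α β k l ∧ β.r (.inl l) (.inr j)

variable {i j i' j' k l k' l' : Fin n}

lemma TT_symm (h : TT α β i j) : TT α β j i := by
  rcases h with h | ⟨k, l, h1, h2, h3⟩
  · exact Or.inl (α.iseqv.symm h)
  · exact Or.inr ⟨l, k, h3, mid_symm h2, h1⟩
lemma BB_symm (h : BB α β i j) : BB α β j i := by
  rcases h with h | ⟨k, l, h1, h2, h3⟩
  · exact Or.inl (β.iseqv.symm h)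
  · exact Or.inr ⟨l, k, h3, mid_symm h2, h1⟩
lemma tt_tm (h : TT α β i j) (h' : TM α β j k) : TM α β i k := by
  obtain ⟨k', aj, m'⟩ := h'
  rcases h with h | ⟨k1, l1, a1, m1, a2⟩
  · exact ⟨k', α.iseqv.trans h aj, m'⟩
  · exact ⟨k1, a1, mid_trans m1 (mid_trans (midA a2 aj) m')⟩
lemma tm_mt (h : TM α β i k) (h' : TM α β j k) : TT α β i j := by
  obtain ⟨k1, a1, m1⟩ := h; obtain ⟨k2, a2, m2⟩ := h'
  exact Or.inr ⟨k1, k2, a1, mid_trans m1 (mid_symm m2), a2⟩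
lemma tm_mm (h : TM α β i k) (h' : mid α β k l) : TM α β i l := by
  obtain ⟨k1, a1, m1⟩ := h; exact ⟨k1, a1, mid_trans m1 h'⟩
lemma tm_mb (h : TM α β i k) (h' : MB α β k j) : TB α β i j := by
  obtain ⟨k1, a1, m1⟩ := h; obtain ⟨l1, m2, b1⟩ := h'
  exact ⟨k1, l1, a1, mid_trans m1 m2, b1⟩
lemma mm_mb (h : mid α β k l) (h' : MB α β l j) : MB α β k j := by
  obtain ⟨l1, m1, b1⟩ := h'; exact ⟨l1, mid_trans h m1, b1⟩
lemma bb_bm (h : BB α β i j) (h' : MB α β k i) : MB α β k j := by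
  obtain ⟨l1, m1, b1⟩ := h'
  rcases h with h | ⟨p, q, bp, m', bq⟩
  · exact ⟨l1, m1, β.iseqv.trans b1 h⟩
  · exact ⟨q, mid_trans m1 (mid_trans (midB b1 bp) m'), bq⟩
lemma tb_bm (h : TB α β i j) (h' : MB α β k j) : TM α β i k := by
  obtain ⟨k1, l1, a, m, b⟩ := h; obtain ⟨l2, m2, b2⟩ := h'
  exact ⟨k1, a, mid_trans m (mid_trans (midB b b2) (mid_symm m2))⟩
lemma tb_bb (h : TB α β i j) (h' : BB α β j j') : TB α β i j' := by
  obtain ⟨k1, l1, a, m, b⟩ := h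
  rcases h' with h' | ⟨p, q, bp, m', bq⟩
  · exact ⟨k1, l1, a, m, β.iseqv.trans b h'⟩
  · exact ⟨k1, q, a, mid_trans m (mid_trans (midB b bp) m'), bq⟩
lemma tt_tb (h : TT α β i j) (h' : TB α β j j') : TB α β i j' := by
  obtain ⟨k1, l1, a, m, b⟩ := h'
  rcases h with h | ⟨k2, l2, a2, m2, a3⟩
  · exact ⟨k1, l1, α.iseqv.trans h a, m, b⟩
  · exact ⟨k2, l1, a2, mid_trans m2 (mid_trans (midA a3 a) m), b⟩
lemma tb_bt (h : TB α β i j) (h' : TB α β i' j) : TT α β i i' := by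
  obtain ⟨k1, l1, a, m, b⟩ := h; obtain ⟨k2, l2, a2, m2, b2⟩ := h'
  exact Or.inr ⟨k1, k2, a, mid_trans m (mid_trans (midB b b2) (mid_symm m2)), a2⟩
lemma mb_bm (h : MB α β k j) (h' : MB α β k' j) : mid α β k k' := by
  obtain ⟨l1, m1, b1⟩ := h; obtain ⟨l2, m2, b2⟩ := h'
  exact mid_trans m1 (mid_trans (midB b1 b2) (mid_symm m2))
lemma mt_tm (h : TM α β j k) (h' : TM α β j l) : mid α β k l := by
  obtain ⟨k1, a1, m1⟩ := h; obtain ⟨k2, a2, m2⟩ := h'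
  exact mid_trans (mid_symm m1) (mid_trans (midA a1 a2) m2)
lemma mt_tb (h : TM α β j k) (h' : TB α β j j') : MB α β k j' := by
  obtain ⟨k1, a1, m1⟩ := h; obtain ⟨k2, l2, a2, m2, b2⟩ := h'
  exact ⟨l2, mid_trans (mid_symm m1) (mid_trans (midA a1 a2) m2), b2⟩
lemma tb_bt' (h : TB α β i j) (h' : TB α β i j') : BB α β j j' := by
  obtain ⟨k1, l1, a1, m1, b1⟩ := h; obtain ⟨k2, l2, a2, m2, b2⟩ := h'
  exact Or.inr ⟨l1, l2, b1, mid_trans (mid_symm m1) (mid_trans (midA a1 a2) m2), b2⟩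
lemma mb_bm' (h : MB α β k i) (h' : MB α β k j) : BB α β i j := by
  obtain ⟨l1, m1, b1⟩ := h; obtain ⟨l2, m2, b2⟩ := h'
  exact Or.inr ⟨l1, l2, b1, mid_trans (mid_symm m1) m2, b2⟩
lemma tt_tt (h : TT α β i j) (h' : TT α β j j') : TT α β i j' := by
  rcases h' with h' | ⟨k2, l2, a2, m2, a3⟩
  · rcases h with h | ⟨k1, l1, a1, m1, a'⟩
    · exact Or.inl (α.iseqv.trans h h')
    · exact Or.inr ⟨k1, l1, a1, m1, α.iseqv.trans (α.iseqv.symm h') a'⟩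
  · exact tm_mt (tt_tm h ⟨k2, a2, mid_refl α β k2⟩) ⟨l2, a3, mid_symm m2⟩
lemma bb_bb (h : BB α β i j) (h' : BB α β j j') : BB α β i j' := by
  rcases h with h | ⟨k1, l1, b1, m1, b2⟩
  · rcases h' with h' | ⟨k2, l2, b3, m2, b4⟩
    · exact Or.inl (β.iseqv.trans h h')
    · exact Or.inr ⟨k2, l2, β.iseqv.trans b3 (β.iseqv.symm h), m2, b4⟩
  · obtain ⟨q, m', bq⟩ := bb_bm h' ⟨l1, mid_refl α β l1, b2⟩
    exact Or.inr ⟨k1, q, b1, mid_trans m1 m', bq⟩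

def T (α β : Ptn n) : Pt n → Pt n → Prop
  | Sum.inl i, Sum.inl j => TT α β i j
  | Sum.inl i, Sum.inr j => TB α β i j
  | Sum.inr i, Sum.inl j => TB α β j i
  | Sum.inr i, Sum.inr j => BB α β i j

def T' (α β : Ptn n) : (Fin n ⊕ Pt n) → (Fin n ⊕ Pt n) → Prop
  | Sum.inl i, Sum.inl j => TT α β i j
  | Sum.inl i, Sum.inr (Sum.inl k) => TM α β i k
  | Sum.inl i, Sum.inr (Sum.inr j) => TB α β i j
  | Sum.inr (Sum.inl k), Sum.inl j => TM α β j k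
  | Sum.inr (Sum.inl k), Sum.inr (Sum.inl l) => mid α β k l
  | Sum.inr (Sum.inl k), Sum.inr (Sum.inr j) => MB α β k j
  | Sum.inr (Sum.inr i), Sum.inl j => TB α β j i
  | Sum.inr (Sum.inr i), Sum.inr (Sum.inl k) => MB α β k i
  | Sum.inr (Sum.inr i), Sum.inr (Sum.inr j) => BB α β i j

lemma T'_refl : ∀ x, T' α β x x
  | Sum.inl i => Or.inl (α.iseqv.refl _)
  | Sum.inr (Sum.inl k) => mid_refl α β k
  | Sum.inr (Sum.inr j) => Or.inl (β.iseqv.refl _)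

lemma T'_symm : ∀ {x y}, T' α β x y → T' α β y x
  | Sum.inl _, Sum.inl _, h => TT_symm h
  | Sum.inl _, Sum.inr (Sum.inl _), h => h
  | Sum.inl _, Sum.inr (Sum.inr _), h => h
  | Sum.inr (Sum.inl _), Sum.inl _, h => h
  | Sum.inr (Sum.inl _), Sum.inr (Sum.inl _), h => mid_symm h
  | Sum.inr (Sum.inl _), Sum.inr (Sum.inr _), h => h
  | Sum.inr (Sum.inr _), Sum.inl _, h => h
  | Sum.inr (Sum.inr _), Sum.inr (Sum.inl _), h => h
  | Sum.inr (Sum.inr _), Sum.inr (Sum.inr _), h => BB_symm h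

lemma T'_trans : ∀ {x y z}, T' α β x y → T' α β y z → T' α β x z
  | Sum.inl _, Sum.inl _, Sum.inl _, h, h' => tt_tt h h'
  | Sum.inl _, Sum.inl _, Sum.inr (Sum.inl _), h, h' => tt_tm h h'
  | Sum.inl _, Sum.inl _, Sum.inr (Sum.inr _), h, h' => tt_tb h h'
  | Sum.inl _, Sum.inr (Sum.inl _), Sum.inl _, h, h' => tm_mt h h'
  | Sum.inl _, Sum.inr (Sum.inl _), Sum.inr (Sum.inl _), h, h' => tm_mm h h'
  | Sum.inl _, Sum.inr (Sum.inl _), Sum.inr (Sum.inr _), h, h' => tm_mb h h'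
  | Sum.inl _, Sum.inr (Sum.inr _), Sum.inl _, h, h' => tb_bt h h'
  | Sum.inl _, Sum.inr (Sum.inr _), Sum.inr (Sum.inl _), h, h' => tb_bm h h'
  | Sum.inl _, Sum.inr (Sum.inr _), Sum.inr (Sum.inr _), h, h' => tb_bb h h'
  | Sum.inr (Sum.inl _), Sum.inl _, Sum.inl _, h, h' => tt_tm (TT_symm h') h
  | Sum.inr (Sum.inl _), Sum.inl _, Sum.inr (Sum.inl _), h, h' => mt_tm h h'
  | Sum.inr (Sum.inl _), Sum.inl _, Sum.inr (Sum.inr _), h, h' => mt_tb h h'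
  | Sum.inr (Sum.inl _), Sum.inr (Sum.inl _), Sum.inl _, h, h' => tm_mm h' (mid_symm h)
  | Sum.inr (Sum.inl _), Sum.inr (Sum.inl _), Sum.inr (Sum.inl _), h, h' => mid_trans h h'
  | Sum.inr (Sum.inl _), Sum.inr (Sum.inl _), Sum.inr (Sum.inr _), h, h' => mm_mb h h'
  | Sum.inr (Sum.inl _), Sum.inr (Sum.inr _), Sum.inl _, h, h' => tb_bm h' h
  | Sum.inr (Sum.inl _), Sum.inr (Sum.inr _), Sum.inr (Sum.inl _), h, h' => mb_bm h h'
  | Sum.inr (Sum.inl _), Sum.inr (Sum.inr _), Sum.inr (Sum.inr _), h, h' => bb_bm h' h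
  | Sum.inr (Sum.inr _), Sum.inl _, Sum.inl _, h, h' => tt_tb (TT_symm h') h
  | Sum.inr (Sum.inr _), Sum.inl _, Sum.inr (Sum.inl _), h, h' => mt_tb h' h
  | Sum.inr (Sum.inr _), Sum.inl _, Sum.inr (Sum.inr _), h, h' => tb_bt' h h'
  | Sum.inr (Sum.inr _), Sum.inr (Sum.inl _), Sum.inl _, h, h' => tm_mb h' h
  | Sum.inr (Sum.inr _), Sum.inr (Sum.inl _), Sum.inr (Sum.inl _), h, h' => mm_mb (mid_symm h') h
  | Sum.inr (Sum.inr _), Sum.inr (Sum.inl _), Sum.inr (Sum.inr _), h, h' => mb_bm' h h'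
  | Sum.inr (Sum.inr _), Sum.inr (Sum.inr _), Sum.inl _, h, h' => tb_bb h' (BB_symm h)
  | Sum.inr (Sum.inr _), Sum.inr (Sum.inr _), Sum.inr (Sum.inl _), h, h' => bb_bm (BB_symm h) h'
  | Sum.inr (Sum.inr _), Sum.inr (Sum.inr _), Sum.inr (Sum.inr _), h, h' => bb_bb h h'

lemma mulBase_le_T' : ∀ {a b}, mulBase α β a b → T' α β a b := by
  rintro a b (⟨x, y, hr, rfl, rfl⟩ | ⟨x, y, hr, rfl, rfl⟩)
  · rcases x with i | k <;> rcases y with j | l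
    · exact Or.inl hr
    · exact ⟨l, hr, mid_refl α β l⟩
    · exact ⟨k, α.iseqv.symm hr, mid_refl α β k⟩
    · exact mid_coker hr
  · rcases x with k | i <;> rcases y with l | j
    · exact mid_ker hr
    · exact ⟨k, mid_refl α β k, hr⟩
    · exact ⟨l, mid_refl α β l, β.iseqv.symm hr⟩
    · exact Or.inl hr

lemma eqvGen_le_T' {a b} (h : Relation.EqvGen (mulBase α β) a b) : T' α β a b := by
  induction h with
  | rel _ _ h => exact mulBase_le_T' h
  | refl x => exact T'_refl x
  | symm _ _ _ ih => exact T'_symm ih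
  | trans _ _ _ _ _ ih1 ih2 => exact T'_trans ih1 ih2

lemma eA {x y : Pt n} (h : α.r x y) :
    Relation.EqvGen (mulBase α β) (iota1 x) (iota1 y) :=
  Relation.EqvGen.rel _ _ (Or.inl ⟨x, y, h, rfl, rfl⟩)
lemma eB {x y : Pt n} (h : β.r x y) :
    Relation.EqvGen (mulBase α β) (iota2 x) (iota2 y) :=
  Relation.EqvGen.rel _ _ (Or.inr ⟨x, y, h, rfl, rfl⟩)
lemma eM {k l : Fin n} (h : mid α β k l) :
    Relation.EqvGen (mulBase α β) (Sum.inr (Sum.inl k)) (Sum.inr (Sum.inl l)) := by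
  induction h with
  | rel k l h =>
    rcases h with h | h
    · exact eA (x := Sum.inr k) (y := Sum.inr l) h
    · exact eB (x := Sum.inl k) (y := Sum.inl l) h
  | refl x => exact Relation.EqvGen.refl _
  | symm _ _ _ ih => exact Relation.EqvGen.symm _ _ ih
  | trans _ _ _ _ _ ih1 ih2 => exact Relation.EqvGen.trans _ _ _ ih1 ih2

lemma T_le_eqvGen : ∀ {x y}, T α β x y →
    Relation.EqvGen (mulBase α β) (iota3 x) (iota3 y)
  | Sum.inl i, Sum.inl j, Or.inl h => eA (x := Sum.inl i) (y := Sum.inl j) h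
  | Sum.inl i, Sum.inl j, Or.inr ⟨k, l, h1, h2, h3⟩ =>
      Relation.EqvGen.trans _ _ _ (eA (x := Sum.inl i) (y := Sum.inr k) h1)
        (Relation.EqvGen.trans _ _ _ (eM h2)
          (Relation.EqvGen.symm _ _ (eA (x := Sum.inl j) (y := Sum.inr l) h3)))
  | Sum.inl i, Sum.inr j, ⟨k, l, h1, h2, h3⟩ =>
      Relation.EqvGen.trans _ _ _ (eA (x := Sum.inl i) (y := Sum.inr k) h1)
        (Relation.EqvGen.trans _ _ _ (eM h2) (eB (x := Sum.inl l) (y := Sum.inr j) h3))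
  | Sum.inr i, Sum.inl j, ⟨k, l, h1, h2, h3⟩ =>
      Relation.EqvGen.symm _ _
        (Relation.EqvGen.trans _ _ _ (eA (x := Sum.inl j) (y := Sum.inr k) h1)
          (Relation.EqvGen.trans _ _ _ (eM h2) (eB (x := Sum.inl l) (y := Sum.inr i) h3)))
  | Sum.inr i, Sum.inr j, Or.inl h => eB (x := Sum.inr i) (y := Sum.inr j) h
  | Sum.inr i, Sum.inr j, Or.inr ⟨k, l, h1, h2, h3⟩ =>
      Relation.EqvGen.trans _ _ _
        (Relation.EqvGen.symm _ _ (eB (x := Sum.inl k) (y := Sum.inr i) h1))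
        (Relation.EqvGen.trans _ _ _ (eM h2) (eB (x := Sum.inl l) (y := Sum.inr j) h3))

lemma pmul_iff (α β : Ptn n) (x y : Pt n) : (pmul α β).r x y ↔ T α β x y := by
  constructor
  · intro h
    have h' : T' α β (iota3 x) (iota3 y) := eqvGen_le_T' h
    rcases x with i | i <;> rcases y with j | j <;> exact h'
  · exact T_le_eqvGen
end helpers


section green
variable {α β : Ptn n}

lemma kerr_equivalence (γ : Ptn n) : Equivalence (kerr γ) :=
  ⟨fun _ => γ.iseqv.refl _, fun h => γ.iseqv.symm h, fun h h' => γ.iseqv.trans h h'⟩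
lemma cokerr_equivalence (γ : Ptn n) : Equivalence (cokerr γ) :=
  ⟨fun _ => γ.iseqv.refl _, fun h => γ.iseqv.symm h, fun h h' => γ.iseqv.trans h h'⟩

lemma mid_le {K : Fin n → Fin n → Prop} (hK : Equivalence K)
    (h1 : ∀ {k l}, cokerr α k l → K k l) (h2 : ∀ {k l}, kerr β k l → K k l)
    {k l} (h : mid α β k l) : K k l :=
  hK.eqvGen_iff.mp (Relation.EqvGen.mono
    (fun a b (hab : cokerr α a b ∨ kerr β a b) => hab.elim (fun x => h1 x) (fun x => h2 x)) _ _ h)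

-- pmul component lemmas
lemma kerr_pmul (i j : Fin n) : kerr (pmul α β) i j ↔ TT α β i j := pmul_iff α β _ _
lemma cokerr_pmul (i j : Fin n) : cokerr (pmul α β) i j ↔ BB α β i j := pmul_iff α β _ _
lemma tb_pmul (i j : Fin n) : (pmul α β).r (.inl i) (.inr j) ↔ TB α β i j := pmul_iff α β _ _

lemma kerr_le_pmul {i j : Fin n} (h : kerr α i j) : kerr (pmul α β) i j :=
  (kerr_pmul i j).mpr (Or.inl h)
lemma dom_pmul_subset : dom (pmul α β) ⊆ dom α := by
  rintro i ⟨j, hj⟩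
  obtain ⟨k, l, h1, _, _⟩ := (tb_pmul i j).mp hj
  exact ⟨k, h1⟩

-- R forward
lemma greenR_forward (h : PGreenR α β) :
    dom α = dom β ∧ ∀ i j : Fin n, kerr α i j ↔ kerr β i j := by
  obtain ⟨⟨γ, hγ⟩, ⟨δ, hδ⟩⟩ := h
  constructor
  · apply Set.Subset.antisymm
    · rw [← hδ]; exact dom_pmul_subset
    · rw [← hγ]; exact dom_pmul_subset
  · intro i j
    constructor
    · intro hk; rw [← hγ]; exact kerr_le_pmul hk
    · intro hk; rw [← hδ]; exact kerr_le_pmul hk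

-- R backward
lemma greenR_backward_ex (hd : dom α = dom β) (hk : ∀ i j : Fin n, kerr α i j ↔ kerr β i j) :
    ∃ γ, pmul α γ = β := by
  classical
  set γ : Ptn n := pmul (star α) β with hγdef
  -- mid (star α) β = kerr α
  have midsab : ∀ {k l}, mid (star α) β k l ↔ kerr α k l := by
    intro k l
    constructor
    · exact fun h => mid_le (α := star α) (β := β) (kerr_equivalence α) (fun h => h) (fun h => (hk _ _).mpr h) h
    · exact fun h => mid_coker (α := star α) (β := β) (show cokerr (star α) k l from h)
  -- γ components
  have γtb : ∀ i j : Fin n, γ.r (.inl i) (.inr j) ↔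
      ∃ k l, α.r (.inl k) (.inr i) ∧ kerr α k l ∧ β.r (.inl l) (.inr j) := by
    intro i j
    rw [hγdef, tb_pmul]
    constructor
    · rintro ⟨k, l, h1, h2, h3⟩
      exact ⟨k, l, α.iseqv.symm h1, midsab.mp h2, h3⟩
    · rintro ⟨k, l, h1, h2, h3⟩
      exact ⟨k, l, α.iseqv.symm h1, midsab.mpr h2, h3⟩
  have γker : ∀ i j : Fin n, kerr γ i j ↔
      cokerr α i j ∨ ∃ k l, α.r (.inl k) (.inr i) ∧ kerr α k l ∧ α.r (.inl l) (.inr j) := by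
    intro i j
    rw [hγdef, kerr_pmul]
    constructor
    · rintro (h | ⟨k, l, h1, h2, h3⟩)
      · exact Or.inl h
      · exact Or.inr ⟨k, l, α.iseqv.symm h1, midsab.mp h2, α.iseqv.symm h3⟩
    · rintro (h | ⟨k, l, h1, h2, h3⟩)
      · exact Or.inl h
      · exact Or.inr ⟨k, l, α.iseqv.symm h1, midsab.mpr h2, α.iseqv.symm h3⟩
  -- mid α γ = kerr γ
  have midag : ∀ {k l}, mid α γ k l ↔ kerr γ k l := by
    intro k l
    constructor
    · exact fun h => mid_le (α := α) (β := γ) (kerr_equivalence γ)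
        (fun h => (γker _ _).mpr (Or.inl h)) (fun h => h) h
    · exact fun h => mid_ker h
  refine ⟨γ, Setoid.ext fun x y => ?_⟩
  have tbcase : ∀ i j : Fin n, (pmul α γ).r (.inl i) (.inr j) ↔ β.r (.inl i) (.inr j) := by
    intro i j
    rw [tb_pmul]
    constructor
    · rintro ⟨k, l, h1, h2, h3⟩
      obtain ⟨p, q, hp, hpq, hq⟩ := (γtb l j).mp h3
      have hkl : kerr γ k l := midag.mp h2
      have hip : kerr α i p := by
        rcases (γker k l).mp hkl with h | ⟨u, v, hu, huv, hv⟩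
        · -- cokerr α k l
          exact α.iseqv.trans (α.iseqv.trans h1 h) (α.iseqv.symm hp)
        · have h1u : kerr α i u := α.iseqv.trans h1 (α.iseqv.symm hu)
          have hvp : kerr α v p := α.iseqv.trans hv (α.iseqv.symm hp)
          exact α.iseqv.trans (α.iseqv.trans h1u huv) hvp
      have : kerr β i q := (hk _ _).mp (α.iseqv.trans hip hpq)
      exact β.iseqv.trans this hq
    · intro hb
      have hi : i ∈ dom α := hd ▸ ⟨j, hb⟩
      obtain ⟨k, hik⟩ := hi
      refine ⟨k, k, hik, midag.mpr ((γker k k).mpr (Or.inl (α.iseqv.refl _))), ?_⟩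
      exact (γtb k j).mpr ⟨i, i, hik, α.iseqv.refl _, hb⟩
  have ttcase : ∀ i j : Fin n, kerr (pmul α γ) i j ↔ kerr β i j := by
    intro i j
    rw [kerr_pmul]
    constructor
    · rintro (h | ⟨k, l, h1, h2, h3⟩)
      · exact (hk _ _).mp h
      · apply (hk _ _).mp
        rcases (γker k l).mp (midag.mp h2) with h | ⟨u, v, hu, huv, hv⟩
        · exact α.iseqv.trans (α.iseqv.trans h1 h) (α.iseqv.symm h3)
        · exact α.iseqv.trans (α.iseqv.trans (α.iseqv.trans h1 (α.iseqv.symm hu)) huv)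
            (α.iseqv.trans hv (α.iseqv.symm h3))
    · exact fun h => Or.inl ((hk _ _).mpr h)
  have bbcase : ∀ i j : Fin n, cokerr (pmul α γ) i j ↔ cokerr β i j := by
    intro i j
    have γcoker : ∀ i j : Fin n, cokerr γ i j ↔ cokerr β i j := by
      intro i j
      rw [hγdef, cokerr_pmul]
      constructor
      · rintro (h | ⟨k, l, h1, h2, h3⟩)
        · exact h
        · exact β.iseqv.trans (β.iseqv.trans (β.iseqv.symm h1)
            (show β.r (.inl k) (.inl l) from (hk _ _).mp (midsab.mp h2))) h3
      · exact fun h => Or.inl h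
    rw [cokerr_pmul]
    constructor
    · rintro (h | ⟨k, l, h1, h2, h3⟩)
      · exact (γcoker i j).mp h
      · obtain ⟨p, q, hp, hpq, hq⟩ := (γtb k i).mp h1
        obtain ⟨p', q', hp', hpq', hq'⟩ := (γtb l j).mp h3
        have hpp' : kerr α p p' := by
          rcases (γker k l).mp (midag.mp h2) with h | ⟨u, v, hu, huv, hv⟩
          · exact α.iseqv.trans (α.iseqv.trans hp h) (α.iseqv.symm hp')
          · exact α.iseqv.trans (α.iseqv.trans (α.iseqv.trans hp (α.iseqv.symm hu)) huv)
              (α.iseqv.trans hv (α.iseqv.symm hp'))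
        have hqq' : kerr β q q' :=
          (hk _ _).mp (α.iseqv.trans (α.iseqv.symm hpq) (α.iseqv.trans hpp' hpq'))
        exact β.iseqv.trans (β.iseqv.symm hq) (β.iseqv.trans hqq' hq')
    · exact fun h => Or.inl ((γcoker i j).mpr h)
  rcases x with i | i <;> rcases y with j | j
  · exact ttcase i j
  · exact tbcase i j
  · constructor
    · exact fun h => β.iseqv.symm ((tbcase j i).mp ((pmul α γ).iseqv.symm h))
    · exact fun h => (pmul α γ).iseqv.symm ((tbcase j i).mpr (β.iseqv.symm h))
  · exact bbcase i j

lemma greenR_iff : PGreenR α β ↔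
    (dom α = dom β ∧ ∀ i j : Fin n, kerr α i j ↔ kerr β i j) := by
  constructor
  · exact greenR_forward
  · rintro ⟨hd, hk⟩
    exact ⟨greenR_backward_ex hd hk,
      greenR_backward_ex hd.symm (fun i j => (hk i j).symm)⟩

-- L via star duality
lemma star_star (α : Ptn n) : star (star α) = α :=
  Setoid.ext fun x y => by
    show α.r x.swap.swap y.swap.swap ↔ α.r x y
    rw [Sum.swap_swap, Sum.swap_swap]

lemma mid_flip {k l : Fin n} : mid α β k l ↔ mid (star β) (star α) k l := by
  constructor
  · intro h
    refine Relation.EqvGen.mono ?_ _ _ h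
    rintro a b (h | h)
    · exact Or.inr (show cokerr α a b from h)
    · exact Or.inl (show kerr β a b from h)
  · intro h
    refine Relation.EqvGen.mono ?_ _ _ h
    rintro a b (h | h)
    · exact Or.inr (show kerr β a b from h)
    · exact Or.inl (show cokerr α a b from h)

lemma star_pmul (α β : Ptn n) : star (pmul α β) = pmul (star β) (star α) := by
  refine Setoid.ext fun x y => ?_
  show (pmul α β).r x.swap y.swap ↔ (pmul (star β) (star α)).r x y
  rw [pmul_iff, pmul_iff]
  rcases x with i | i <;> rcases y with j | j
  · show BB α β i j ↔ TT (star β) (star α) i j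
    constructor
    · rintro (h | ⟨k, l, h1, h2, h3⟩)
      · exact Or.inl h
      · exact Or.inr ⟨k, l, β.iseqv.symm h1, mid_flip.mp h2, β.iseqv.symm h3⟩
    · rintro (h | ⟨k, l, h1, h2, h3⟩)
      · exact Or.inl h
      · exact Or.inr ⟨k, l, β.iseqv.symm h1, mid_flip.mpr h2, β.iseqv.symm h3⟩
  · show TB α β j i ↔ TB (star β) (star α) i j
    constructor
    · rintro ⟨k, l, h1, h2, h3⟩
      exact ⟨l, k, β.iseqv.symm h3, mid_flip.mp (mid_symm h2), α.iseqv.symm h1⟩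
    · rintro ⟨k, l, h1, h2, h3⟩
      exact ⟨l, k, α.iseqv.symm h3, mid_symm (mid_flip.mpr h2), β.iseqv.symm h1⟩
  · show TB α β i j ↔ TB (star β) (star α) j i
    constructor
    · rintro ⟨k, l, h1, h2, h3⟩
      exact ⟨l, k, β.iseqv.symm h3, mid_flip.mp (mid_symm h2), α.iseqv.symm h1⟩
    · rintro ⟨k, l, h1, h2, h3⟩
      exact ⟨l, k, α.iseqv.symm h3, mid_symm (mid_flip.mpr h2), β.iseqv.symm h1⟩
  · show TT α β i j ↔ BB (star β) (star α) i j
    constructor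
    · rintro (h | ⟨k, l, h1, h2, h3⟩)
      · exact Or.inl h
      · exact Or.inr ⟨k, l, α.iseqv.symm h1, mid_flip.mp h2, α.iseqv.symm h3⟩
    · rintro (h | ⟨k, l, h1, h2, h3⟩)
      · exact Or.inl h
      · exact Or.inr ⟨k, l, α.iseqv.symm h1, mid_flip.mpr h2, α.iseqv.symm h3⟩

lemma dom_star (α : Ptn n) : dom (star α) = codom α := by
  ext i
  constructor
  · rintro ⟨j, hj⟩; exact ⟨j, α.iseqv.symm hj⟩
  · rintro ⟨j, hj⟩; exact ⟨j, α.iseqv.symm hj⟩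

lemma greenL_iff : PGreenL α β ↔
    (codom α = codom β ∧ ∀ i j : Fin n, cokerr α i j ↔ cokerr β i j) := by
  have key : PGreenL α β ↔ PGreenR (star α) (star β) := by
    constructor
    · rintro ⟨⟨γ, hγ⟩, ⟨δ, hδ⟩⟩
      exact ⟨⟨star γ, by rw [← star_pmul, hγ]⟩, ⟨star δ, by rw [← star_pmul, hδ]⟩⟩
    · rintro ⟨⟨γ, hγ⟩, ⟨δ, hδ⟩⟩
      refine ⟨⟨star γ, ?_⟩, ⟨star δ, ?_⟩⟩
      · rw [show α = star (star α) from (star_star α).symm, ← star_pmul, hγ, star_star]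
      · rw [show β = star (star β) from (star_star β).symm, ← star_pmul, hδ, star_star]
  rw [key, greenR_iff, dom_star, dom_star]
  constructor
  · rintro ⟨h1, h2⟩
    exact ⟨h1, fun i j => h2 i j⟩
  · rintro ⟨h1, h2⟩
    exact ⟨h1, fun i j => h2 i j⟩

-- rank machinery
def isMinrep (α : Ptn n) (i : Fin n) : Prop := i ∈ dom α ∧ ∀ j ∈ dom α, kerr α i j → i ≤ j

lemma rank_eq (α : Ptn n) : rank α = Set.ncard {i : Fin n | isMinrep α i} := rfl

lemma dom_kerr_closed {i j : Fin n} (hi : i ∈ dom α) (h : kerr α i j) : j ∈ dom α := by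
  obtain ⟨k, hk⟩ := hi
  exact ⟨k, α.iseqv.trans (α.iseqv.symm h) hk⟩

lemma exists_minrep {i : Fin n} (hi : i ∈ dom α) : ∃ m, isMinrep α m ∧ kerr α i m := by
  obtain ⟨m, ⟨hm1, hm2⟩, hmin⟩ := Set.exists_min_image {j | j ∈ dom α ∧ kerr α i j} id
    (Set.toFinite _) ⟨i, hi, α.iseqv.refl _⟩
  exact ⟨m, ⟨hm1, fun j hj hmj => hmin j ⟨hj, α.iseqv.trans hm2 hmj⟩⟩, hm2⟩

lemma minrep_unique {m m' : Fin n} (h : isMinrep α m) (h' : isMinrep α m')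
    (hk : kerr α m m') : m = m' :=
  le_antisymm (h.2 m' h'.1 hk) (h'.2 m h.1 (α.iseqv.symm hk))

lemma rank_pmul_right (α δ : Ptn n) : rank (pmul α δ) ≤ rank α := by
  classical
  rw [rank_eq, rank_eq]
  set π := pmul α δ with hπ
  have hdom : ∀ {i}, i ∈ dom π → i ∈ dom α := fun h => dom_pmul_subset h
  set f : Fin n → Fin n := fun i =>
    if h : i ∈ dom α then Classical.choose (exists_minrep h) else i with hf
  apply Set.ncard_le_ncard_of_injOn f
  · rintro i ⟨hi, _⟩
    have hia := hdom hi
    rw [hf]; simp only [dif_pos hia]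
    exact (Classical.choose_spec (exists_minrep hia)).1
  · rintro i ⟨hi, hi2⟩ i' ⟨hi', hi2'⟩ heq
    have hia := hdom hi; have hia' := hdom hi'
    rw [hf] at heq; simp only [dif_pos hia, dif_pos hia'] at heq
    have s1 := Classical.choose_spec (exists_minrep hia)
    have s2 := Classical.choose_spec (exists_minrep hia')
    have hkα : kerr α i i' := α.iseqv.trans s1.2 (heq ▸ (α.iseqv.symm s2.2))
    have hkπ : kerr π i i' := kerr_le_pmul hkα
    exact le_antisymm (hi2 i' hi' hkπ) (hi2' i hi (π.iseqv.symm hkπ))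

lemma rank_pmul_left (γ α : Ptn n) : rank (pmul γ α) ≤ rank α := by
  classical
  rw [rank_eq, rank_eq]
  set π := pmul γ α with hπ
  -- for i ∈ dom π pick the middle landing point in dom α
  have key : ∀ {i}, i ∈ dom π → ∃ l, l ∈ dom α ∧
      ∃ k, γ.r (.inl i) (.inr k) ∧ mid γ α k l := by
    rintro i ⟨j, hj⟩
    obtain ⟨k, l, h1, h2, h3⟩ := (tb_pmul (α := γ) (β := α) i j).mp hj
    exact ⟨l, ⟨j, h3⟩, k, h1, h2⟩
  set g : Fin n → Fin n := fun i =>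
    if h : i ∈ dom π then Classical.choose (key h) else i with hg
  set f : Fin n → Fin n := fun i =>
    if h : (g i) ∈ dom α then Classical.choose (exists_minrep h) else i with hf
  apply Set.ncard_le_ncard_of_injOn f
  · rintro i ⟨hi, _⟩
    have hgl := Classical.choose_spec (key hi)
    rw [hf, hg]; simp only [dif_pos hi, dif_pos hgl.1]
    exact (Classical.choose_spec (exists_minrep hgl.1)).1
  · rintro i ⟨hi, hi2⟩ i' ⟨hi', hi2'⟩ heq
    have hgl := Classical.choose_spec (key hi)
    have hgl' := Classical.choose_spec (key hi')
    rw [hf, hg] at heq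
    simp only [dif_pos hi, dif_pos hi', dif_pos hgl.1, dif_pos hgl'.1] at heq
    have s1 := Classical.choose_spec (exists_minrep hgl.1)
    have s2 := Classical.choose_spec (exists_minrep hgl'.1)
    -- kerr α (g i) (g i')
    have hk : kerr α (Classical.choose (key hi)) (Classical.choose (key hi')) := by
      refine α.iseqv.trans s1.2 ?_
      rw [heq]
      exact α.iseqv.symm s2.2
    obtain ⟨k, hgk, hmk⟩ := hgl.2
    obtain ⟨k', hgk', hmk'⟩ := hgl'.2
    have hkπ : kerr π i i' := (kerr_pmul (α := γ) (β := α) i i').mpr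
      (Or.inr ⟨k, k', hgk, mid_trans hmk (mid_trans (mid_ker hk) (mid_symm hmk')), hgk'⟩)
    exact le_antisymm (hi2 i' hi' hkπ) (hi2' i hi (π.iseqv.symm hkπ))

lemma greenJ_forward (h : PGreenJ α β) : rank α = rank β := by
  obtain ⟨⟨γ, δ, h1⟩, ⟨γ', δ', h2⟩⟩ := h
  apply le_antisymm
  · calc rank α = rank (pmul (pmul γ' β) δ') := by rw [h2]
      _ ≤ rank (pmul γ' β) := rank_pmul_right _ _
      _ ≤ rank β := rank_pmul_left _ _
  · calc rank β = rank (pmul (pmul γ α) δ) := by rw [h1]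
      _ ≤ rank (pmul γ α) := rank_pmul_right _ _
      _ ≤ rank α := rank_pmul_left _ _

-- the two factors used in the J-class construction
def lfRel (β : Ptn n) (f : {i // isMinrep β i} → Fin n) : Pt n → Pt n → Prop
  | Sum.inl i, Sum.inl j => kerr β i j
  | Sum.inl i, Sum.inr j => ∃ b : {i // isMinrep β i}, kerr β i ↑b ∧ j = f b
  | Sum.inr i, Sum.inl j => ∃ b : {i // isMinrep β i}, kerr β j ↑b ∧ i = f b
  | Sum.inr i, Sum.inr j => i = j

def leftFactor (β : Ptn n) (f : {i // isMinrep β i} → Fin n)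
    (hf : Function.Injective f) : Ptn n where
  r := lfRel β f
  iseqv := by
    refine ⟨fun x => ?_, @fun x y h => ?_, @fun x y z h h' => ?_⟩
    · rcases x with i | i
      · exact β.iseqv.refl _
      · rfl
    · rcases x with i | i <;> rcases y with j | j
      · exact β.iseqv.symm h
      · exact h
      · exact h
      · exact h.symm
    · rcases x with i | i <;> rcases y with j | j <;> rcases z with k | k
      · exact β.iseqv.trans h h'
      · obtain ⟨b, hb, rfl⟩ := h'
        exact ⟨b, β.iseqv.trans h hb, rfl⟩
      · obtain ⟨b, hb, rfl⟩ := h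
        obtain ⟨b', hb', hfb⟩ := h'
        cases hf hfb.symm
        exact β.iseqv.trans hb (β.iseqv.symm hb')
      · obtain ⟨b, hb, rfl⟩ := h
        cases h'
        exact ⟨b, hb, rfl⟩
      · obtain ⟨b, hb, rfl⟩ := h
        exact ⟨b, β.iseqv.trans (β.iseqv.symm h') hb, rfl⟩
      · obtain ⟨b, hb, rfl⟩ := h
        obtain ⟨b', hb', rfl⟩ := h'
        have hbb : b = b' := Subtype.ext
          (minrep_unique b.2 b'.2 (β.iseqv.trans (β.iseqv.symm hb) hb'))
        exact congrArg f hbb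
      · cases h
        exact h'
      · exact h.trans h'

def rfRel (β : Ptn n) {S : Type} (p : S → Fin n) (q : S → {i // isMinrep β i}) :
    Pt n → Pt n → Prop
  | Sum.inl i, Sum.inl j => i = j
  | Sum.inl i, Sum.inr j => ∃ a : S, i = p a ∧ β.r (.inl ↑(q a)) (.inr j)
  | Sum.inr i, Sum.inl j => ∃ a : S, j = p a ∧ β.r (.inl ↑(q a)) (.inr i)
  | Sum.inr i, Sum.inr j => cokerr β i j

def rightFactor (β : Ptn n) {S : Type} (p : S → Fin n) (q : S → {i // isMinrep β i})
    (hp : Function.Injective p) (hq : Function.Injective q) : Ptn n where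
  r := rfRel β p q
  iseqv := by
    refine ⟨fun x => ?_, @fun x y h => ?_, @fun x y z h h' => ?_⟩
    · rcases x with i | i
      · rfl
      · exact β.iseqv.refl _
    · rcases x with i | i <;> rcases y with j | j
      · exact h.symm
      · exact h
      · exact h
      · exact β.iseqv.symm h
    · rcases x with i | i <;> rcases y with j | j <;> rcases z with k | k
      · exact h.trans h'
      · cases h
        exact h'
      · obtain ⟨a, rfl, ha⟩ := h
        obtain ⟨a', rfl, ha'⟩ := h'
        have haa : a = a' := hq (Subtype.ext
          (minrep_unique (q a).2 (q a').2 (β.iseqv.trans ha (β.iseqv.symm ha'))))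
        exact congrArg p haa
      · obtain ⟨a, rfl, ha⟩ := h
        exact ⟨a, rfl, β.iseqv.trans ha h'⟩
      · cases h'
        exact h
      · obtain ⟨a, hpa, ha⟩ := h
        obtain ⟨a', hpa', ha'⟩ := h'
        cases hp (hpa.symm.trans hpa')
        exact β.iseqv.trans (β.iseqv.symm ha) ha'
      · obtain ⟨a, hpa, ha⟩ := h'
        exact ⟨a, hpa, β.iseqv.trans ha (β.iseqv.symm h)⟩
      · exact β.iseqv.trans h h'

lemma exists_fac (h : rank α = rank β) : ∃ γ δ, pmul (pmul γ α) δ = β := by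
  classical
  haveI : Fintype {i // isMinrep α i} := Fintype.ofFinite _
  haveI : Fintype {i // isMinrep β i} := Fintype.ofFinite _
  have hcard : Fintype.card {i // isMinrep β i} = Fintype.card {i // isMinrep α i} := by
    have h1 : Nat.card {i // isMinrep β i} = rank β := Nat.card_coe_set_eq {i : Fin n | isMinrep β i}
    have h2 : Nat.card {i // isMinrep α i} = rank α := Nat.card_coe_set_eq {i : Fin n | isMinrep α i}
    rw [← Nat.card_eq_fintype_card, ← Nat.card_eq_fintype_card, h1, h2, h]
  set e : {i // isMinrep β i} ≃ {i // isMinrep α i} := Fintype.equivOfCardEq hcard with he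
  set f : {i // isMinrep β i} → Fin n := fun b => ↑(e b) with hfdef
  have hf : Function.Injective f := fun a b hab => e.injective (Subtype.ext hab)
  set γc : Ptn n := leftFactor β f hf with hγc
  set pa : {i // isMinrep α i} → Fin n := fun a => Classical.choose a.2.1 with hpa
  have pa_spec : ∀ a : {i // isMinrep α i}, α.r (.inl ↑a) (.inr (pa a)) := fun a => Classical.choose_spec a.2.1
  have hp : Function.Injective pa := by
    intro a a' hh
    refine Subtype.ext (minrep_unique a.2 a'.2 ?_)
    exact α.iseqv.trans (pa_spec a) (hh ▸ α.iseqv.symm (pa_spec a'))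
  set δc : Ptn n := rightFactor β pa e.symm hp e.symm.injective with hδc
  -- mid γc α = kerr α
  have midγα : ∀ {k l}, mid γc α k l ↔ kerr α k l := by
    intro k l
    constructor
    · refine fun hh => mid_le (α := γc) (β := α) (kerr_equivalence α) ?_ (fun h => h) hh
      intro k l hkl
      cases (show k = l from hkl)
      exact α.iseqv.refl _
    · exact fun hh => mid_ker hh
  set π : Ptn n := pmul γc α with hπ
  have π2 : ∀ i j : Fin n, π.r (.inl i) (.inr j) ↔
      ∃ b : {i // isMinrep β i}, kerr β i ↑b ∧ α.r (.inl ↑(e b)) (.inr j) := by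
    intro i j
    rw [hπ, tb_pmul]
    constructor
    · rintro ⟨k, l, hg, hm, ha⟩
      obtain ⟨b, hib, rfl⟩ := (show ∃ b : {i // isMinrep β i}, kerr β i ↑b ∧ k = f b from hg)
      exact ⟨b, hib, α.iseqv.trans (midγα.mp hm) ha⟩
    · rintro ⟨b, hib, ha⟩
      exact ⟨f b, f b, ⟨b, hib, rfl⟩, midγα.mpr (α.iseqv.refl _), ha⟩
  have π1 : ∀ i j : Fin n, kerr π i j ↔ kerr β i j := by
    intro i j
    rw [hπ, kerr_pmul]
    constructor
    · rintro (hh | ⟨k, l, hg, hm, hg'⟩)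
      · exact hh
      · obtain ⟨b, hib, rfl⟩ := (show ∃ b : {i // isMinrep β i}, kerr β i ↑b ∧ k = f b from hg)
        obtain ⟨b', hjb', rfl⟩ := (show ∃ b : {i // isMinrep β i}, kerr β j ↑b ∧ l = f b from hg')
        have hk : kerr α ↑(e b) ↑(e b') := midγα.mp hm
        have hbb : b = b' := e.injective (Subtype.ext (minrep_unique (e b).2 (e b').2 hk))
        exact β.iseqv.trans hib (hbb ▸ β.iseqv.symm hjb')
    · exact fun hh => Or.inl hh
  have π3 : ∀ k l : Fin n, cokerr π k l ↔ cokerr α k l ∨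
      ∃ u v, α.r (.inl u) (.inr k) ∧ kerr α u v ∧ α.r (.inl v) (.inr l) := by
    intro k l
    rw [hπ, cokerr_pmul]
    constructor
    · rintro (hh | ⟨u, v, h1, hm, h2⟩)
      · exact Or.inl hh
      · exact Or.inr ⟨u, v, h1, midγα.mp hm, h2⟩
    · rintro (hh | ⟨u, v, h1, hm, h2⟩)
      · exact Or.inl hh
      · exact Or.inr ⟨u, v, h1, midγα.mpr hm, h2⟩
  have link : ∀ {k l u v : Fin n}, cokerr π k l → α.r (.inl u) (.inr k) →
      α.r (.inl v) (.inr l) → kerr α u v := by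
    intro k l u v hc hu hv
    rcases (π3 k l).mp hc with hh | ⟨p, q, hp', hpq, hq⟩
    · exact α.iseqv.trans (α.iseqv.trans hu hh) (α.iseqv.symm hv)
    · exact α.iseqv.trans (α.iseqv.trans (α.iseqv.trans hu (α.iseqv.symm hp')) hpq)
        (α.iseqv.trans hq (α.iseqv.symm hv))
  have midπδ : ∀ {k l}, mid π δc k l ↔ cokerr π k l := by
    intro k l
    constructor
    · refine fun hh => mid_le (α := π) (β := δc) (cokerr_equivalence π) (fun h => h) ?_ hh
      intro k l hkl
      cases (show k = l from hkl)
      exact π.iseqv.refl _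
    · exact fun hh => mid_coker hh
  refine ⟨γc, δc, ?_⟩
  have tbρ : ∀ i j : Fin n, (pmul π δc).r (.inl i) (.inr j) ↔ β.r (.inl i) (.inr j) := by
    intro i j
    rw [tb_pmul]
    constructor
    · rintro ⟨k, l, hπ1, hm, hδ⟩
      obtain ⟨a, rfl, hb⟩ := (show ∃ a : {i // isMinrep α i}, l = pa a ∧ β.r (.inl ↑(e.symm a)) (.inr j) from hδ)
      obtain ⟨b, hib, hα⟩ := (π2 i k).mp hπ1
      have hk : kerr α ↑(e b) ↑a := link (midπδ.mp hm) hα (pa_spec a)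
      have hba : e b = a := Subtype.ext (minrep_unique (e b).2 a.2 hk)
      have hsb : e.symm a = b := by rw [← hba, Equiv.symm_apply_apply]
      exact β.iseqv.trans hib (hsb ▸ hb)
    · intro hb
      obtain ⟨m, hm1, hm2⟩ := exists_minrep (⟨j, hb⟩ : i ∈ dom β)
      refine ⟨pa (e ⟨m, hm1⟩), pa (e ⟨m, hm1⟩),
        (π2 i _).mpr ⟨⟨m, hm1⟩, hm2, pa_spec (e ⟨m, hm1⟩)⟩,
        midπδ.mpr (π.iseqv.refl _), ?_⟩
      exact ⟨e ⟨m, hm1⟩, rfl, by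
        rw [Equiv.symm_apply_apply]
        exact β.iseqv.trans (β.iseqv.symm hm2) hb⟩
  have ttρ : ∀ i j : Fin n, kerr (pmul π δc) i j ↔ kerr β i j := by
    intro i j
    rw [kerr_pmul]
    constructor
    · rintro (hh | ⟨k, l, h1, hm, h2⟩)
      · exact (π1 i j).mp hh
      · exact (π1 i j).mp (π.iseqv.trans (π.iseqv.trans h1
          (show π.r (.inr k) (.inr l) from midπδ.mp hm)) (π.iseqv.symm h2))
    · exact fun hh => Or.inl ((π1 i j).mpr hh)
  have bbρ : ∀ i j : Fin n, cokerr (pmul π δc) i j ↔ cokerr β i j := by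
    intro i j
    rw [cokerr_pmul]
    constructor
    · rintro (hh | ⟨k, l, h1, hm, h2⟩)
      · exact hh
      · obtain ⟨a, rfl, ha⟩ := (show ∃ a : {i // isMinrep α i}, k = pa a ∧ β.r (.inl ↑(e.symm a)) (.inr i) from h1)
        obtain ⟨a', rfl, ha'⟩ := (show ∃ a : {i // isMinrep α i}, l = pa a ∧ β.r (.inl ↑(e.symm a)) (.inr j) from h2)
        have hk : kerr α ↑a ↑a' := link (midπδ.mp hm) (pa_spec a) (pa_spec a')
        have haa : a = a' := Subtype.ext (minrep_unique a.2 a'.2 hk)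
        exact β.iseqv.trans (β.iseqv.symm ha) (haa ▸ ha')
    · exact fun hh => Or.inl hh
  refine Setoid.ext fun x y => ?_
  rcases x with i | i <;> rcases y with j | j
  · exact ttρ i j
  · exact tbρ i j
  · constructor
    · exact fun hh => β.iseqv.symm ((tbρ j i).mp ((pmul π δc).iseqv.symm hh))
    · exact fun hh => (pmul π δc).iseqv.symm ((tbρ j i).mpr (β.iseqv.symm hh))
  · exact bbρ i j

lemma greenJ_iff : PGreenJ α β ↔ rank α = rank β := by
  constructor
  · exact greenJ_forward
  · exact fun h => ⟨exists_fac h, exists_fac h.symm⟩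
end green

end PM

/-- Green's relations on the partition monoid `P_n`:
`α R β` iff `dom α = dom β` and `ker α = ker β`; `α L β` iff `codom α = codom β` and
`coker α = coker β`; `α J β` iff `rank α = rank β`. -/
theorem stmt13 (n : ℕ) (α β : PM.Ptn n) :
    (PM.PGreenR α β ↔ (PM.dom α = PM.dom β ∧ ∀ i j : Fin n, PM.kerr α i j ↔ PM.kerr β i j)) ∧
    (PM.PGreenL α β ↔ (PM.codom α = PM.codom β ∧ ∀ i j : Fin n, PM.cokerr α i j ↔ PM.cokerr β i j)) ∧
    (PM.PGreenJ α β ↔ PM.rank α = PM.rank β) := by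
  refine ⟨PM.greenR_iff, PM.greenL_iff, PM.greenJ_iff⟩
end
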